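/- Let P be a formula-based program. Then the interpretation M_P is a model of P, i.e., for every rule A ← φ of P and every variable assignment h, ⟦A⟧^{M_P}_h ≥ ⟦φ⟧^{M_P}_h. -/

import Mathlib

/-!
Infinite-valued semantics for formula-based logic programs
(Rondogiannis–Wadge style), following Lüdecke,
"Every Formula-Based Logic Program Has a Least Infinite-Valued Model".
-/

noncomputable section

namespace ILP

attribute [local instance] Classical.propDecidable

/-- The first uncountable ordinal. -/
def omega1 : Ordinal.{0} := Ordinal.omega 1

lemma omega1_isLimit : Order.IsSuccLimit omega1 := Cardinal.isSuccLimit_omega 1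

lemma zero_lt_omega1 : (0 : Ordinal) < omega1 := omega1_isLimit.pos

lemma succ_lt_omega1 {a : Ordinal} (h : a < omega1) : a + 1 < omega1 := by
  rw [Ordinal.add_one_eq_succ]
  exact omega1_isLimit.succ_lt h

/-- Pre-truth-values: `F α`, `0`, `T α` for arbitrary ordinals `α`. -/
inductive TVPre : Type 1 where
  | F : Ordinal → TVPre
  | zero : TVPre
  | T : Ordinal → TVPre

/-- A pre-truth-value is countable if its index is a countable ordinal. -/
def TVPre.countable : TVPre → Prop
  | .F a => a < omega1
  | .zero => True
  | .T a => a < omega1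

/-- The set `W` of truth values:
`F_α` (false values) for countable `α`, `0`, and `T_α` (true values) for countable `α`. -/
def W : Type 1 := {v : TVPre // v.countable}

/-- The strict order on truth values:
`F_0 < F_1 < ... < 0 < ... < T_1 < T_0`. -/
def TVPre.lt : TVPre → TVPre → Prop
  | .F a, .F b => a < b
  | .F _, .zero => True
  | .F _, .T _ => True
  | .zero, .T _ => True
  | .T a, .T b => b < a
  | _, _ => False

instance : LT W := ⟨fun x y => TVPre.lt x.1 y.1⟩

instance : LE W := ⟨fun x y => x = y ∨ x < y⟩

lemma TVPre.lt_trans {a b c : TVPre} (hab : a.lt b) (hbc : b.lt c) : a.lt c := by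
  cases a <;> cases b <;> cases c <;> simp_all [TVPre.lt] <;>
    first | exact hab.trans hbc | exact hbc.trans hab

lemma TVPre.lt_irrefl {a : TVPre} (h : a.lt a) : False := by
  cases a <;> simp_all [TVPre.lt]

instance instLinearOrderW : LinearOrder W where
  le_refl a := Or.inl rfl
  le_trans a b c hab hbc := by
    rcases hab with rfl | hab
    · exact hbc
    rcases hbc with rfl | hbc
    · exact Or.inr hab
    · exact Or.inr (TVPre.lt_trans hab hbc)
  le_antisymm a b hab hba := by
    rcases hab with rfl | hab
    · rfl
    rcases hba with rfl | hba
    · rfl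
    exact absurd (TVPre.lt_trans hab hba) TVPre.lt_irrefl
  le_total a b := by
    obtain ⟨a1, ha⟩ := a
    obtain ⟨b1, hb⟩ := b
    have tri : a1 = b1 ∨ a1.lt b1 ∨ b1.lt a1 := by
      cases a1 <;> cases b1 <;> simp [TVPre.lt] <;> (try rename_i x y) <;>
        (try rcases lt_trichotomy x y with h | h | h) <;> tauto
    rcases tri with h | h | h
    · exact Or.inl (Or.inl (Subtype.ext h))
    · exact Or.inl (Or.inr h)
    · exact Or.inr (Or.inr h)
  lt_iff_le_not_ge a b := by
    constructor
    · intro h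
      refine ⟨Or.inr h, ?_⟩
      rintro (rfl | h')
      · exact TVPre.lt_irrefl h
      · exact TVPre.lt_irrefl (TVPre.lt_trans h h')
    · rintro ⟨rfl | h, h2⟩
      · exact absurd (Or.inl rfl) h2
      · exact h
  toDecidableLE := Classical.decRel _

/-- The false value `F_α`. -/
def WF (a : Ordinal) (h : a < omega1) : W := ⟨.F a, h⟩

/-- The true value `T_α`. -/
def WT (a : Ordinal) (h : a < omega1) : W := ⟨.T a, h⟩

/-- The undefined value `0`. -/
def WZ : W := ⟨.zero, trivial⟩

/-- `deg w < α` : the degree of `w` (which is `∞` for `0`) is less than `α`. -/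
def degLT (w : W) (α : Ordinal) : Prop :=
  match w.1 with
  | .F a => a < α
  | .zero => False
  | .T a => a < α

/-- The set of indices of true values occurring in `M`. -/
def TIdx (M : Set W) : Set Ordinal := {a | ∃ w ∈ M, w.1 = TVPre.T a}

/-- The set of indices of false values occurring in `M`. -/
def FIdx (M : Set W) : Set Ordinal := {a | ∃ w ∈ M, w.1 = TVPre.F a}

lemma mem_lt_omega1_of_TIdx {M : Set W} {a : Ordinal} (h : a ∈ TIdx M) : a < omega1 := by
  obtain ⟨w, _, hw⟩ := h
  have := w.2
  rw [hw] at this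
  exact this

lemma mem_lt_omega1_of_FIdx {M : Set W} {a : Ordinal} (h : a ∈ FIdx M) : a < omega1 := by
  obtain ⟨w, _, hw⟩ := h
  have := w.2
  rw [hw] at this
  exact this

/-- The least upper bound of a subset of `W`. -/
def Wsup (M : Set W) : W :=
  if h : (TIdx M).Nonempty then
    WT (sInf (TIdx M))
      (lt_of_le_of_lt (csInf_le' h.choose_spec) (mem_lt_omega1_of_TIdx h.choose_spec))
  else if WZ ∈ M then WZ
  else if h2 : sSup (FIdx M) < omega1 then WF (sSup (FIdx M)) h2
  else WZ

/-- The greatest lower bound of a subset of `W`. -/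
def Winf (M : Set W) : W :=
  if h : (FIdx M).Nonempty then
    WF (sInf (FIdx M))
      (lt_of_le_of_lt (csInf_le' h.choose_spec) (mem_lt_omega1_of_FIdx h.choose_spec))
  else if WZ ∈ M then WZ
  else if h2 : sSup (TIdx M) < omega1 then WT (sSup (TIdx M)) h2
  else WZ

/-- The semantics of negation on `W`. -/
def Wneg : W → W
  | ⟨.F a, h⟩ => WT (a + 1) (succ_lt_omega1 h)
  | ⟨.zero, _⟩ => WZ
  | ⟨.T a, h⟩ => WF (a + 1) (succ_lt_omega1 h)

/-! ### Syntax -/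

/-- A first-order language with finitely many predicate symbols (at least one),
finitely many function symbols and finitely many constants (at least one). -/
structure Language where
  nPred : ℕ
  predAr : Fin nPred → ℕ
  nFun : ℕ
  funAr : Fin nFun → ℕ
  nConst : ℕ
  npos : 1 ≤ nPred
  cpos : 1 ≤ nConst

variable {L : Language}

/-- Terms of the language; variables are indexed by natural numbers. -/
inductive Term (L : Language) : Type where
  | var : ℕ → Term L
  | const : Fin L.nConst → Term L
  | func : (f : Fin L.nFun) → (Fin (L.funAr f) → Term L) → Term L

/-- A term is ground if it contains no variables. -/
def Term.ground : Term L → Prop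
  | .var _ => False
  | .const _ => True
  | .func _ ts => ∀ i, (ts i).ground

/-- The Herbrand universe: the set of ground terms. -/
def HU (L : Language) : Type := {t : Term L // t.ground}

/-- Formulas of the language. -/
inductive Formula (L : Language) : Type where
  | verum : Formula L
  | falsum : Formula L
  | atom : (p : Fin L.nPred) → (Fin (L.predAr p) → Term L) → Formula L
  | neg : Formula L → Formula L
  | conj : Formula L → Formula L → Formula L
  | disj : Formula L → Formula L → Formula L
  | all : ℕ → Formula L → Formula L
  | ex : ℕ → Formula L → Formula L

/-- A ground atom: a predicate symbol applied to ground terms.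
The Herbrand base `H_B` is the type of ground atoms. -/
structure GroundAtom (L : Language) : Type where
  pred : Fin L.nPred
  args : Fin (L.predAr pred) → HU L

/-- An (infinite-valued Herbrand) interpretation. -/
def Interp (L : Language) : Type 1 := GroundAtom L → W

/-- Evaluation of a term under a variable assignment. -/
def Term.evalT (h : ℕ → HU L) : Term L → HU L
  | .var n => h n
  | .const c => ⟨.const c, trivial⟩
  | .func f ts => ⟨.func f fun i => ((ts i).evalT h).1, fun i => ((ts i).evalT h).2⟩

/-- The infinite-valued semantics of formulas, relative to an interpretation and
a variable assignment. -/
def Formula.eval (I : Interp L) : Formula L → (ℕ → HU L) → W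
  | .verum, _ => WT 0 zero_lt_omega1
  | .falsum, _ => WF 0 zero_lt_omega1
  | .atom p ts, h => I ⟨p, fun i => (ts i).evalT h⟩
  | .neg φ, h => Wneg (φ.eval I h)
  | .conj φ ψ, h => min (φ.eval I h) (ψ.eval I h)
  | .disj φ ψ, h => max (φ.eval I h) (ψ.eval I h)
  | .ex v φ, h => Wsup (Set.range fun u : HU L => φ.eval I (Function.update h v u))
  | .all v φ, h => Winf (Set.range fun u : HU L => φ.eval I (Function.update h v u))

/-- The variables occurring in a term. -/
def Term.vars : Term L → Set ℕ
  | .var n => {n}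
  | .const _ => ∅
  | .func _ ts => ⋃ i, (ts i).vars

/-- The free variables of a formula. -/
def Formula.freeVars : Formula L → Set ℕ
  | .verum => ∅
  | .falsum => ∅
  | .atom _ ts => ⋃ i, (ts i).vars
  | .neg φ => φ.freeVars
  | .conj φ ψ => φ.freeVars ∪ ψ.freeVars
  | .disj φ ψ => φ.freeVars ∪ ψ.freeVars
  | .all v φ => φ.freeVars \ {v}
  | .ex v φ => φ.freeVars \ {v}

/-- Applying a substitution to a term. -/
def Term.subst (σ : ℕ → Term L) : Term L → Term L
  | .var n => σ n
  | .const c => .const c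
  | .func f ts => .func f fun i => (ts i).subst σ

/-- Applying a substitution to a formula (bound variables are not substituted). -/
def Formula.subst (σ : ℕ → Term L) : Formula L → Formula L
  | .verum => .verum
  | .falsum => .falsum
  | .atom p ts => .atom p fun i => (ts i).subst σ
  | .neg φ => .neg (φ.subst σ)
  | .conj φ ψ => .conj (φ.subst σ) (ψ.subst σ)
  | .disj φ ψ => .disj (φ.subst σ) (ψ.subst σ)
  | .all v φ => .all v (φ.subst (Function.update σ v (Term.var v)))
  | .ex v φ => .ex v (φ.subst (Function.update σ v (Term.var v)))

/-- A formula-based rule `A ← φ`: the head is an atom `P(t₁,…,tₛ)`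
(hence distinct from `⊤` and `⊥`) and the body is an arbitrary formula. -/
structure Rule (L : Language) : Type where
  headPred : Fin L.nPred
  headArgs : Fin (L.predAr headPred) → Term L
  body : Formula L

/-- The head of a rule, as an atomic formula. -/
def Rule.headAtom (r : Rule L) : Formula L := .atom r.headPred r.headArgs

/-- A formula-based logic program: a finite set of formula-based rules. -/
structure Program (L : Language) : Type where
  rules : Set (Rule L)
  finite : rules.Finite

/-- The set `P_G` of ground instances of a program `P`: pairs `(Aσ, φσ)` obtained
from a rule `A ← φ` of `P` and a substitution `σ` such that `Aσ` is a ground atom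
and `φσ` has no free variables. -/
def groundInstances (P : Program L) : Set (GroundAtom L × Formula L) :=
  {Aφ | ∃ r ∈ P.rules, ∃ σ : ℕ → Term L,
    (∃ hg : ∀ i, ((r.headArgs i).subst σ).ground,
      Aφ.1 = ⟨r.headPred, fun i => ⟨(r.headArgs i).subst σ, hg i⟩⟩) ∧
    Aφ.2 = r.body.subst σ ∧ (r.body.subst σ).freeVars = ∅}

/-- A default variable assignment (possible since there is at least one constant). -/
def defaultAssignment (L : Language) : ℕ → HU L :=
  fun _ => ⟨.const ⟨0, L.cpos⟩, trivial⟩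

/-- The value of a closed formula (independent of the variable assignment). -/
def Formula.evalClosed (I : Interp L) (φ : Formula L) : W :=
  φ.eval I (defaultAssignment L)

/-- The immediate consequence operator `T_P`. -/
def TP (P : Program L) (I : Interp L) : Interp L :=
  fun A => Wsup {w | ∃ φ : Formula L, (A, φ) ∈ groundInstances P ∧ w = φ.evalClosed I}

/-- `I ∥ F_β` : the set of ground atoms receiving value `F_β` under `I`. -/
def Ifalse (I : Interp L) (β : Ordinal) : Set (GroundAtom L) := {A | (I A).1 = TVPre.F β}

/-- `I ∥ T_β` : the set of ground atoms receiving value `T_β` under `I`. -/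
def Itrue (I : Interp L) (β : Ordinal) : Set (GroundAtom L) := {A | (I A).1 = TVPre.T β}

/-- `I =_α J`. -/
def eqa (α : Ordinal) (I J : Interp L) : Prop :=
  ∀ β ≤ α, Ifalse I β = Ifalse J β ∧ Itrue I β = Itrue J β

/-- `I ⊑_α J`. -/
def sqa (α : Ordinal) (I J : Interp L) : Prop :=
  (∀ β < α, eqa β I J) ∧ Ifalse J α ⊆ Ifalse I α ∧ Itrue I α ⊆ Itrue J α

/-- `I ⊏_α J`. -/
def sqlt (α : Ordinal) (I J : Interp L) : Prop := sqa α I J ∧ ¬ eqa α I J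

/-- `I ⊑_∞ J`. -/
def sqinf (I J : Interp L) : Prop := I = J ∨ ∃ α < omega1, sqlt α I J

/-- `I` satisfies the rule `A ← φ`. -/
def satisfies (I : Interp L) (r : Rule L) : Prop :=
  ∀ h : ℕ → HU L, r.body.eval I h ≤ r.headAtom.eval I h

/-- `I` is a model of `P`. -/
def isModel (I : Interp L) (P : Program L) : Prop := ∀ r ∈ P.rules, satisfies I r

/-- The transfinite iterates `T^β_{P,α}(I)`. -/
def iter (P : Program L) (α : Ordinal) (hα : α < omega1) (I : Interp L)
    (β : Ordinal) : Interp L :=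
  Ordinal.limitRecOn β I (fun _ J => TP P J)
    (fun β _ ih A =>
      if degLT (I A) α then I A
      else if ∃ γ, ∃ hγ : γ < β, (ih γ hγ A).1 = TVPre.T α then WT α hα
      else if ∀ γ, ∀ hγ : γ < β, (ih γ hγ A).1 = TVPre.F α then WF α hα
      else WF (α + 1) (succ_lt_omega1 hα))

/-- The union `⊔_{γ<α} I_γ` of a family of interpretations. -/
def unionInterp (α : Ordinal) (hα : α < omega1) (Ig : ∀ γ, γ < α → Interp L) :
    Interp L := fun A =>
  if h : ∃ ζ, ∃ hζ : ζ < α, ((Ig ζ hζ) A).1 = TVPre.F ζ ∨ ((Ig ζ hζ) A).1 = TVPre.T ζ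
  then Ig h.choose h.choose_spec.choose A
  else WF α hα

/-- The approximants `M_α` of a program `P`. -/
def approx (P : Program L) (α : Ordinal) : Interp L :=
  if hα : α < omega1 then
    if (∀ γ, ∀ _ : γ < α, ∀ ζ, ζ < γ → eqa ζ (approx P ζ) (approx P γ)) ∧
        sqa α (unionInterp α hα fun γ _ => approx P γ)
          (TP P (unionInterp α hα fun γ _ => approx P γ))
    then iter P α hα (unionInterp α hα fun γ _ => approx P γ) omega1
    else fun _ => WF 0 zero_lt_omega1
  else fun _ => WF 0 zero_lt_omega1
termination_by α
decreasing_by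
  all_goals first | assumption | exact lt_trans ‹_› ‹_›

/-- The depth `δ_P` of a program `P`. -/
def depth (P : Program L) : Ordinal :=
  sInf {δ | δ < omega1 ∧ ∀ γ, δ ≤ γ → γ < omega1 →
    Ifalse (approx P γ) γ = ∅ ∧ Itrue (approx P γ) γ = ∅}

/-- The least infinite-valued model `M_P` of a program `P`. -/
def MP (P : Program L) : Interp L := fun A =>
  if degLT (approx P (depth P) A) (depth P) then approx P (depth P) A else WZ

/-! ### Three-valued semantics -/

/-- The three truth values `F < 0 < T`. -/
inductive TV3 : Type where
  | F : TV3
  | Z : TV3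
  | T : TV3
deriving DecidableEq

/-- Numeric coding of the three truth values. -/
def TV3.toNat : TV3 → ℕ
  | .F => 0
  | .Z => 1
  | .T => 2

instance : LinearOrder TV3 :=
  LinearOrder.lift' TV3.toNat (fun a b => by
    cases a <;> cases b <;> simp [TV3.toNat])

/-- A three-valued interpretation. -/
def Interp3 (L : Language) : Type := GroundAtom L → TV3

/-- Supremum of a set of three-valued truth values. -/
def sup3 (S : Set TV3) : TV3 :=
  if TV3.T ∈ S then .T else if TV3.Z ∈ S then .Z else .F

/-- Infimum of a set of three-valued truth values. -/
def inf3 (S : Set TV3) : TV3 :=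
  if TV3.F ∈ S then .F else if TV3.Z ∈ S then .Z else .T

/-- Three-valued negation. -/
def neg3 : TV3 → TV3
  | .F => .T
  | .Z => .Z
  | .T => .F

/-- The three-valued semantics of formulas. -/
def Formula.eval3 (K : Interp3 L) : Formula L → (ℕ → HU L) → TV3
  | .verum, _ => .T
  | .falsum, _ => .F
  | .atom p ts, h => K ⟨p, fun i => (ts i).evalT h⟩
  | .neg φ, h => neg3 (φ.eval3 K h)
  | .conj φ ψ, h => min (φ.eval3 K h) (ψ.eval3 K h)
  | .disj φ ψ, h => max (φ.eval3 K h) (ψ.eval3 K h)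
  | .ex v φ, h => sup3 (Set.range fun u : HU L => φ.eval3 K (Function.update h v u))
  | .all v φ, h => inf3 (Set.range fun u : HU L => φ.eval3 K (Function.update h v u))

/-- Collapsing all false values to `F` and all true values to `T`. -/
def collapse : W → TV3 := fun w =>
  match w.1 with
  | .F _ => .F
  | .zero => .Z
  | .T _ => .T

/-- The collapse of an infinite-valued interpretation. -/
def collapseI (I : Interp L) : Interp3 L := fun A => collapse (I A)

/-- `K` is a three-valued model of `P`. -/
def isModel3 (K : Interp3 L) (P : Program L) : Prop :=
  ∀ r ∈ P.rules, ∀ h : ℕ → HU L, r.body.eval3 K h ≤ r.headAtom.eval3 K h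

/-- The three-valued interpretation `M_{P,3}`. -/
def MP3 (P : Program L) : Interp3 L := collapseI (MP P)

/-- The negation degree of a formula. -/
def Formula.negDeg : Formula L → ℕ
  | .verum => 0
  | .falsum => 0
  | .atom _ _ => 0
  | .neg φ => φ.negDeg + 1
  | .conj φ ψ => max φ.negDeg ψ.negDeg
  | .disj φ ψ => max φ.negDeg ψ.negDeg
  | .all _ φ => φ.negDeg
  | .ex _ φ => φ.negDeg



/-! ### Auxiliary development for the proof of Statement 11 -/

/-- The degree of a truth value, with `⊤` for `0`. -/
def deg (w : W) : WithTop Ordinal :=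
  match w.1 with
  | .F a => (a : WithTop Ordinal)
  | .zero => ⊤
  | .T a => (a : WithTop Ordinal)

lemma deg_WF (a : Ordinal) (h : a < omega1) : deg (WF a h) = a := rfl
lemma deg_WT (a : Ordinal) (h : a < omega1) : deg (WT a h) = a := rfl
lemma deg_WZ : deg WZ = ⊤ := rfl

/-- case analysis on a truth value -/
lemma W.cases (w : W) :
    (∃ a, ∃ h : a < omega1, w = WF a h) ∨ w = WZ ∨ (∃ a, ∃ h : a < omega1, w = WT a h) := by
  obtain ⟨t, ht⟩ := w
  cases t with
  | F a => exact Or.inl ⟨a, ht, rfl⟩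
  | zero => exact Or.inr (Or.inl rfl)
  | T a => exact Or.inr (Or.inr ⟨a, ht, rfl⟩)

lemma degLT_iff (w : W) (α : Ordinal) : degLT w α ↔ deg w < (α : WithTop Ordinal) := by
  rcases W.cases w with ⟨a, h, rfl⟩ | rfl | ⟨a, h, rfl⟩ <;>
    simp [degLT, deg, WF, WT, WZ, WithTop.coe_lt_coe]

lemma WF_lt_WF_iff {a b ha hb} : WF a ha < WF b hb ↔ a < b := Iff.rfl
lemma WT_lt_WT_iff {a b ha hb} : WT a ha < WT b hb ↔ b < a := Iff.rfl
lemma WF_lt_WZ {a ha} : WF a ha < WZ := trivial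
lemma WF_lt_WT {a b ha hb} : WF a ha < WT b hb := trivial
lemma WZ_lt_WT {a ha} : WZ < WT a ha := trivial

lemma WF_le_WF_iff {a b ha hb} : WF a ha ≤ WF b hb ↔ a ≤ b := by
  constructor
  · rintro (h | h)
    · exact le_of_eq (congrArg (fun w : W => match w.1 with | .F a => a | _ => 0) h)
    · exact le_of_lt h
  · intro h
    rcases h.lt_or_eq with h | h
    · exact le_of_lt h
    · subst h; exact le_refl _

lemma WT_le_WT_iff {a b ha hb} : WT a ha ≤ WT b hb ↔ b ≤ a := by
  constructor
  · rintro (h | h)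
    · exact le_of_eq (congrArg (fun w : W => match w.1 with | .T a => a | _ => 0) h).symm
    · exact le_of_lt h
  · intro h
    rcases h.lt_or_eq with h | h
    · exact le_of_lt h
    · subst h; exact le_refl _

lemma WF_ne_WZ {a ha} : WF a ha ≠ WZ := fun h => by
  have := congrArg (fun w : W => deg w) h
  simp [deg_WF, deg_WZ] at this

lemma WF_ne_WT {a b ha hb} : WF a ha ≠ WT b hb := fun h => by
  cases (Subtype.ext_iff.1 h)

lemma WZ_ne_WT {a ha} : WZ ≠ WT a ha := fun h => by
  cases (Subtype.ext_iff.1 h)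

lemma WF_inj {a b ha hb} (h : WF a ha = WF b hb) : a = b := by
  cases (Subtype.ext_iff.1 h); rfl

lemma WT_inj {a b ha hb} (h : WT a ha = WT b hb) : a = b := by
  cases (Subtype.ext_iff.1 h); rfl

/-- a low `F` value is below anything of larger degree -/
lemma WF_lt_of_deg_lt {a : Ordinal} {ha} {w : W} (h : (a : WithTop Ordinal) < deg w) :
    WF a ha < w := by
  rcases W.cases w with ⟨b, hb, rfl⟩ | rfl | ⟨b, hb, rfl⟩
  · exact WF_lt_WF_iff.2 (by rw [deg_WF] at h; exact_mod_cast h)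
  · exact WF_lt_WZ
  · exact WF_lt_WT

/-- a low `T` value is above anything of larger degree -/
lemma lt_WT_of_deg_lt {a : Ordinal} {ha} {w : W} (h : (a : WithTop Ordinal) < deg w) :
    w < WT a ha := by
  rcases W.cases w with ⟨b, hb, rfl⟩ | rfl | ⟨b, hb, rfl⟩
  · exact WF_lt_WT
  · exact WZ_lt_WT
  · exact WT_lt_WT_iff.2 (by rw [deg_WT] at h; exact_mod_cast h)

/-! ### `isF`, `isT` and the relations `Req` / `Rsq` on truth values -/

def isF (w : W) (a : Ordinal) : Prop := w.1 = TVPre.F a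
def isT (w : W) (a : Ordinal) : Prop := w.1 = TVPre.T a

lemma isF_WF {a ha} : isF (WF a ha) a := rfl
lemma isT_WT {a ha} : isT (WT a ha) a := rfl

lemma isF_iff {w : W} {a : Ordinal} : isF w a ↔ ∃ h, w = WF a h := by
  constructor
  · intro h
    obtain ⟨t, ht⟩ := w
    cases (show t = TVPre.F a from h)
    exact ⟨ht, rfl⟩
  · rintro ⟨h, rfl⟩; rfl

lemma isT_iff {w : W} {a : Ordinal} : isT w a ↔ ∃ h, w = WT a h := by
  constructor
  · intro h
    obtain ⟨t, ht⟩ := w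
    cases (show t = TVPre.T a from h)
    exact ⟨ht, rfl⟩
  · rintro ⟨h, rfl⟩; rfl

lemma deg_eq_of_isF {w : W} {a : Ordinal} (h : isF w a) : deg w = (a : WithTop Ordinal) := by
  obtain ⟨h', rfl⟩ := isF_iff.1 h; rfl

lemma deg_eq_of_isT {w : W} {a : Ordinal} (h : isT w a) : deg w = (a : WithTop Ordinal) := by
  obtain ⟨h', rfl⟩ := isT_iff.1 h; rfl

lemma isF_eq_isF {v w : W} {a : Ordinal} (hv : isF v a) (hw : isF w a) : v = w := by
  obtain ⟨h1, rfl⟩ := isF_iff.1 hv; obtain ⟨h2, rfl⟩ := isF_iff.1 hw; rfl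

lemma isT_eq_isT {v w : W} {a : Ordinal} (hv : isT v a) (hw : isT w a) : v = w := by
  obtain ⟨h1, rfl⟩ := isT_iff.1 hv; obtain ⟨h2, rfl⟩ := isT_iff.1 hw; rfl

lemma not_isF_isT {w : W} {a b : Ordinal} (hv : isF w a) (hw : isT w b) : False := by
  obtain ⟨h1, rfl⟩ := isF_iff.1 hv; cases hw

lemma isF_inj {w : W} {a b : Ordinal} (ha : isF w a) (hb : isF w b) : a = b := by
  obtain ⟨h1, rfl⟩ := isF_iff.1 ha; cases hb; rfl

lemma isT_inj {w : W} {a b : Ordinal} (ha : isT w a) (hb : isT w b) : a = b := by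
  obtain ⟨h1, rfl⟩ := isT_iff.1 ha; cases hb; rfl

lemma deg_eq_cases {w : W} {a : Ordinal} (h : deg w = (a : WithTop Ordinal)) :
    isF w a ∨ isT w a := by
  rcases W.cases w with ⟨b, hb, rfl⟩ | rfl | ⟨b, hb, rfl⟩
  · left; rw [deg_WF] at h; cases (WithTop.coe_injective h); exact isF_WF
  · exact absurd h (by simp [deg_WZ])
  · right; rw [deg_WT] at h; cases (WithTop.coe_injective h); exact isT_WT

lemma deg_lt_top_cases {w : W} (h : deg w ≠ ⊤) :
    ∃ a : Ordinal, a < omega1 ∧ deg w = (a : WithTop Ordinal) := by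
  rcases W.cases w with ⟨b, hb, rfl⟩ | rfl | ⟨b, hb, rfl⟩
  · exact ⟨b, hb, rfl⟩
  · exact absurd deg_WZ h
  · exact ⟨b, hb, rfl⟩

lemma idx_lt_omega1_of_isF {w : W} {a : Ordinal} (h : isF w a) : a < omega1 := by
  obtain ⟨h', rfl⟩ := isF_iff.1 h; exact h'

lemma idx_lt_omega1_of_isT {w : W} {a : Ordinal} (h : isT w a) : a < omega1 := by
  obtain ⟨h', rfl⟩ := isT_iff.1 h; exact h'

/-- value-level version of `=_α` -/
def Req (α : Ordinal) (v w : W) : Prop :=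
  (v = w ∧ deg v ≤ (α : WithTop Ordinal)) ∨
  ((α : WithTop Ordinal) < deg v ∧ (α : WithTop Ordinal) < deg w)

/-- value-level version of `⊑_α` -/
def Rsq (α : Ordinal) (v w : W) : Prop :=
  (v = w ∧ deg v < (α : WithTop Ordinal)) ∨
  (isF v α ∧ (α : WithTop Ordinal) ≤ deg w) ∨
  (isT v α ∧ isT w α) ∨
  ((α : WithTop Ordinal) < deg v ∧ (α : WithTop Ordinal) ≤ deg w ∧ ¬ isF w α)

lemma Req_refl (α : Ordinal) (v : W) : Req α v v := by
  rcases le_or_gt (deg v) (α : WithTop Ordinal) with h | h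
  · exact Or.inl ⟨rfl, h⟩
  · exact Or.inr ⟨h, h⟩

lemma Req_symm {α : Ordinal} {v w : W} (h : Req α v w) : Req α w v := by
  rcases h with ⟨rfl, h⟩ | ⟨h1, h2⟩
  · exact Or.inl ⟨rfl, h⟩
  · exact Or.inr ⟨h2, h1⟩

lemma Req_trans {α : Ordinal} {u v w : W} (h1 : Req α u v) (h2 : Req α v w) : Req α u w := by
  rcases h1 with ⟨rfl, h1⟩ | ⟨ha, hb⟩
  · exact h2
  · rcases h2 with ⟨rfl, h2⟩ | ⟨hc, hd⟩
    · exact absurd h2 (not_le.2 hb)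
    · exact Or.inr ⟨ha, hd⟩

lemma Req_mono {α β : Ordinal} {v w : W} (hβ : β ≤ α) (h : Req α v w) : Req β v w := by
  rcases h with ⟨rfl, h⟩ | ⟨h1, h2⟩
  · exact Req_refl β v
  · exact Or.inr ⟨lt_of_le_of_lt (by exact_mod_cast hβ) h1,
      lt_of_le_of_lt (by exact_mod_cast hβ) h2⟩

lemma Req_low_eq {α : Ordinal} {v w : W} (h : Req α v w)
    (hd : deg v ≤ (α : WithTop Ordinal)) : v = w := by
  rcases h with ⟨rfl, _⟩ | ⟨h1, _⟩
  · rfl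
  · exact absurd hd (not_le.2 h1)

lemma Req_low_eq' {α : Ordinal} {v w : W} (h : Req α v w)
    (hd : deg w ≤ (α : WithTop Ordinal)) : v = w := (Req_low_eq (Req_symm h) hd).symm

/-- persistence lemmas for `Rsq` -/
lemma Rsq_low_eq {α : Ordinal} {v w : W} (h : Rsq α v w)
    (hd : deg v < (α : WithTop Ordinal)) : w = v := by
  rcases h with ⟨rfl, _⟩ | ⟨h1, _⟩ | ⟨h1, _⟩ | ⟨h1, _⟩
  · rfl
  · exact absurd hd (by rw [deg_eq_of_isF h1]; exact lt_irrefl _)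
  · exact absurd hd (by rw [deg_eq_of_isT h1]; exact lt_irrefl _)
  · exact absurd (lt_trans h1 hd) (lt_irrefl _)

lemma Rsq_deg {α : Ordinal} {v w : W} (h : Rsq α v w)
    (hd : (α : WithTop Ordinal) ≤ deg v) : (α : WithTop Ordinal) ≤ deg w := by
  rcases h with ⟨rfl, h1⟩ | ⟨_, h1⟩ | ⟨_, h1⟩ | ⟨_, h1, _⟩
  · exact hd
  · exact h1
  · exact le_of_eq (deg_eq_of_isT h1).symm
  · exact h1

lemma Rsq_T {α : Ordinal} {v w : W} (h : Rsq α v w) (hv : isT v α) : isT w α := by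
  rcases h with ⟨rfl, h1⟩ | ⟨h1, _⟩ | ⟨_, h1⟩ | ⟨h1, _⟩
  · exact hv
  · exact absurd hv (fun hv => not_isF_isT h1 hv)
  · exact h1
  · exact absurd h1 (by rw [deg_eq_of_isT hv]; exact lt_irrefl _)

lemma Rsq_F {α : Ordinal} {v w : W} (h : Rsq α v w) (hw : isF w α) : isF v α := by
  rcases h with ⟨rfl, _⟩ | ⟨h1, _⟩ | ⟨_, h1⟩ | ⟨_, _, h1⟩
  · exact hw
  · exact h1
  · exact absurd hw (fun hw => not_isF_isT hw h1)
  · exact absurd hw h1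

lemma Rsq_low_eq' {α : Ordinal} {v w : W} (h : Rsq α v w)
    (hd : deg w < (α : WithTop Ordinal)) : w = v := by
  rcases h with ⟨rfl, _⟩ | ⟨_, h1⟩ | ⟨_, h1⟩ | ⟨_, h1, _⟩
  · rfl
  · exact absurd hd (not_lt.2 h1)
  · exact absurd hd (by rw [deg_eq_of_isT h1]; exact lt_irrefl _)
  · exact absurd hd (not_lt.2 h1)

lemma Rsq_refl (α : Ordinal) (v : W) : Rsq α v v := by
  rcases lt_trichotomy (deg v) (α : WithTop Ordinal) with h | h | h
  · exact Or.inl ⟨rfl, h⟩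
  · rcases deg_eq_cases h with hF | hT
    · exact Or.inr (Or.inl ⟨hF, le_of_eq h.symm⟩)
    · exact Or.inr (Or.inr (Or.inl ⟨hT, hT⟩))
  · refine Or.inr (Or.inr (Or.inr ⟨h, le_of_lt h, fun hF => ?_⟩))
    rw [deg_eq_of_isF hF] at h; exact lt_irrefl _ h

lemma Rsq_trans {α : Ordinal} {u v w : W} (h1 : Rsq α u v) (h2 : Rsq α v w) :
    Rsq α u w := by
  rcases h1 with ⟨rfl, hd⟩ | ⟨hF, hd⟩ | ⟨hT, hT'⟩ | ⟨hd, hd', hnF⟩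
  · exact h2
  · exact Or.inr (Or.inl ⟨hF, Rsq_deg h2 hd⟩)
  · exact Or.inr (Or.inr (Or.inl ⟨hT, Rsq_T h2 hT'⟩))
  · exact Or.inr (Or.inr (Or.inr ⟨hd, Rsq_deg h2 hd', fun hF => hnF (Rsq_F h2 hF)⟩))

lemma Rsq_of_Req {α : Ordinal} {v w : W} (h : Req α v w) : Rsq α v w := by
  rcases h with ⟨rfl, hd⟩ | ⟨h1, h2⟩
  · exact Rsq_refl α v
  · refine Or.inr (Or.inr (Or.inr ⟨h1, le_of_lt h2, fun hF => ?_⟩))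
    rw [deg_eq_of_isF hF] at h2; exact lt_irrefl _ h2

lemma Req_of_Rsq_lt {α β : Ordinal} {v w : W} (h : Rsq α v w) (hβ : β < α) :
    Req β v w := by
  have hβ' : (β : WithTop Ordinal) < (α : WithTop Ordinal) := by exact_mod_cast hβ
  rcases h with ⟨rfl, _⟩ | ⟨h1, h2⟩ | ⟨h1, h2⟩ | ⟨h1, h2, _⟩
  · exact Req_refl β v
  · exact Or.inr ⟨by rw [deg_eq_of_isF h1]; exact hβ', lt_of_lt_of_le hβ' h2⟩
  · exact Or.inr ⟨by rw [deg_eq_of_isT h1]; exact hβ', by rw [deg_eq_of_isT h2]; exact hβ'⟩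
  · exact Or.inr ⟨lt_trans hβ' h1, lt_of_lt_of_le hβ' h2⟩

/-! ### API for `Wsup` and `Winf` -/

lemma mem_TIdx_of {M : Set W} {w : W} {a : Ordinal} (hw : w ∈ M) (h : isT w a) :
    a ∈ TIdx M := ⟨w, hw, h⟩

lemma mem_FIdx_of {M : Set W} {w : W} {a : Ordinal} (hw : w ∈ M) (h : isF w a) :
    a ∈ FIdx M := ⟨w, hw, h⟩

lemma bddAbove_FIdx (M : Set W) : BddAbove (FIdx M) :=
  ⟨omega1, fun _ ha => (mem_lt_omega1_of_FIdx ha).le⟩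

lemma bddAbove_TIdx (M : Set W) : BddAbove (TIdx M) :=
  ⟨omega1, fun _ ha => (mem_lt_omega1_of_TIdx ha).le⟩

lemma Wsup_isT {M : Set W} (h : (TIdx M).Nonempty) : isT (Wsup M) (sInf (TIdx M)) := by
  unfold Wsup; rw [dif_pos h]; exact isT_WT

lemma Wsup_eq_WZ_zero {M : Set W} (h1 : ¬(TIdx M).Nonempty) (h2 : WZ ∈ M) :
    Wsup M = WZ := by
  unfold Wsup; rw [dif_neg h1, if_pos h2]

lemma Wsup_isF {M : Set W} (h1 : ¬(TIdx M).Nonempty) (h2 : WZ ∉ M)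
    (h3 : sSup (FIdx M) < omega1) : isF (Wsup M) (sSup (FIdx M)) := by
  unfold Wsup; rw [dif_neg h1, if_neg h2, dif_pos h3]; exact isF_WF

lemma Wsup_eq_WZ_unbdd {M : Set W} (h1 : ¬(TIdx M).Nonempty) (h2 : WZ ∉ M)
    (h3 : ¬ sSup (FIdx M) < omega1) : Wsup M = WZ := by
  unfold Wsup; rw [dif_neg h1, if_neg h2, dif_neg h3]

lemma Winf_isF {M : Set W} (h : (FIdx M).Nonempty) : isF (Winf M) (sInf (FIdx M)) := by
  unfold Winf; rw [dif_pos h]; exact isF_WF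

lemma Winf_eq_WZ_zero {M : Set W} (h1 : ¬(FIdx M).Nonempty) (h2 : WZ ∈ M) :
    Winf M = WZ := by
  unfold Winf; rw [dif_neg h1, if_pos h2]

lemma Winf_isT {M : Set W} (h1 : ¬(FIdx M).Nonempty) (h2 : WZ ∉ M)
    (h3 : sSup (TIdx M) < omega1) : isT (Winf M) (sSup (TIdx M)) := by
  unfold Winf; rw [dif_neg h1, if_neg h2, dif_pos h3]; exact isT_WT

lemma Winf_eq_WZ_unbdd {M : Set W} (h1 : ¬(FIdx M).Nonempty) (h2 : WZ ∉ M)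
    (h3 : ¬ sSup (TIdx M) < omega1) : Winf M = WZ := by
  unfold Winf; rw [dif_neg h1, if_neg h2, dif_neg h3]

/-- in the `F`-branch of `Wsup`, every member is a false value -/
lemma isF_of_mem {M : Set W} (h1 : ¬(TIdx M).Nonempty) (h2 : WZ ∉ M) {w : W}
    (hw : w ∈ M) : ∃ a, isF w a ∧ a ∈ FIdx M := by
  rcases W.cases w with ⟨a, ha, rfl⟩ | rfl | ⟨a, ha, rfl⟩
  · exact ⟨a, isF_WF, mem_FIdx_of hw isF_WF⟩
  · exact absurd hw h2
  · exact absurd ⟨a, mem_TIdx_of hw isT_WT⟩ h1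

lemma isT_of_mem {M : Set W} (h1 : ¬(FIdx M).Nonempty) (h2 : WZ ∉ M) {w : W}
    (hw : w ∈ M) : ∃ a, isT w a ∧ a ∈ TIdx M := by
  rcases W.cases w with ⟨a, ha, rfl⟩ | rfl | ⟨a, ha, rfl⟩
  · exact absurd ⟨a, mem_FIdx_of hw isF_WF⟩ h1
  · exact absurd hw h2
  · exact ⟨a, isT_WT, mem_TIdx_of hw isT_WT⟩

lemma exists_lt_mem_of_lt_csSup {S : Set Ordinal} {β : Ordinal} (h : β < sSup S) :
    ∃ a ∈ S, β < a := by
  by_contra hc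
  push_neg at hc
  rcases S.eq_empty_or_nonempty with rfl | hne
  · rw [csSup_empty] at h
    exact absurd h ((not_lt_zero (a := β)))
  · exact absurd (csSup_le hne hc) (not_le.2 h)

lemma exists_mem_gt_of_unbdd {S : Set Ordinal} {β : Ordinal}
    (h : ¬ sSup S < omega1) (hβ : β < omega1) : ∃ a ∈ S, β < a := by
  by_contra hc
  push_neg at hc
  rcases S.eq_empty_or_nonempty with rfl | hne
  · rw [csSup_empty] at h
    exact h zero_lt_omega1
  · exact h (lt_of_le_of_lt (csSup_le hne hc) hβ)

/-- `Wsup` is an upper bound. -/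
lemma le_Wsup {M : Set W} {w : W} (hw : w ∈ M) : w ≤ Wsup M := by
  by_cases h1 : (TIdx M).Nonempty
  · obtain ⟨hh, he⟩ := isT_iff.1 (Wsup_isT h1)
    rw [he]
    rcases W.cases w with ⟨a, ha, rfl⟩ | rfl | ⟨a, ha, rfl⟩
    · exact le_of_lt WF_lt_WT
    · exact le_of_lt WZ_lt_WT
    · exact WT_le_WT_iff.2 (csInf_le (OrderBot.bddBelow _) (mem_TIdx_of hw isT_WT))
  · by_cases h2 : WZ ∈ M
    · rw [Wsup_eq_WZ_zero h1 h2]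
      rcases W.cases w with ⟨a, ha, rfl⟩ | rfl | ⟨a, ha, rfl⟩
      · exact le_of_lt WF_lt_WZ
      · exact le_refl _
      · exact absurd ⟨a, mem_TIdx_of hw isT_WT⟩ h1
    · obtain ⟨a, haw, haF⟩ := isF_of_mem h1 h2 hw
      obtain ⟨hh, he⟩ := isF_iff.1 haw
      rw [he]
      by_cases h3 : sSup (FIdx M) < omega1
      · obtain ⟨hh2, he2⟩ := isF_iff.1 (Wsup_isF h1 h2 h3)
        rw [he2]
        exact WF_le_WF_iff.2 (le_csSup (bddAbove_FIdx M) haF)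
      · rw [Wsup_eq_WZ_unbdd h1 h2 h3]
        exact le_of_lt WF_lt_WZ

/-! ### `Wsup` and `Winf` respect `Req` -/

section ReqClosure

variable {ι : Type} {α : Ordinal} {f g : ι → W}

lemma Req_Wsup_aux (H : ∀ i, Req α (f i) (g i))
    (h : deg (Wsup (Set.range f)) ≤ (α : WithTop Ordinal)) :
    Wsup (Set.range g) = Wsup (Set.range f) := by
  by_cases hTf : (TIdx (Set.range f)).Nonempty
  · have hs := Wsup_isT hTf
    set a := sInf (TIdx (Set.range f)) with ha_def
    have haα : (a : WithTop Ordinal) ≤ (α : WithTop Ordinal) := by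
      rw [deg_eq_of_isT hs] at h; exact h
    obtain ⟨w, ⟨i, rfl⟩, hw⟩ := csInf_mem hTf
    have hgi : g i = f i :=
      (Req_low_eq (H i) (by rw [deg_eq_of_isT hw]; exact haα)).symm
    have hTg : (TIdx (Set.range g)).Nonempty :=
      ⟨a, mem_TIdx_of ⟨i, rfl⟩ (by rw [hgi]; exact hw)⟩
    have hs2 := Wsup_isT hTg
    set b := sInf (TIdx (Set.range g)) with hb_def
    have hba : b ≤ a :=
      csInf_le (OrderBot.bddBelow _) (mem_TIdx_of ⟨i, rfl⟩ (by rw [hgi]; exact hw))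
    obtain ⟨w2, ⟨j, rfl⟩, hw2⟩ := csInf_mem hTg
    have hdegj : deg (g j) ≤ (α : WithTop Ordinal) := by
      rw [deg_eq_of_isT hw2]
      exact le_trans (by exact_mod_cast hba) haα
    have hfj : f j = g j := Req_low_eq' (H j) hdegj
    have hab : a ≤ b :=
      csInf_le (OrderBot.bddBelow _) (mem_TIdx_of ⟨j, rfl⟩ (by rw [hfj]; exact hw2))
    have : b = a := le_antisymm hba hab
    rw [this] at hs2
    exact isT_eq_isT hs2 hs
  · by_cases hZf : WZ ∈ Set.range f
    · rw [Wsup_eq_WZ_zero hTf hZf, deg_WZ] at h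
      exact absurd h (by simp)
    · by_cases hFf : sSup (FIdx (Set.range f)) < omega1
      · have hs := Wsup_isF hTf hZf hFf
        have hcα : ((sSup (FIdx (Set.range f)) : Ordinal) : WithTop Ordinal) ≤ (α : WithTop Ordinal) := by
          rw [deg_eq_of_isF hs] at h; exact h
        have hfe : g = f := by
          funext i
          obtain ⟨b, hb, hbF⟩ := isF_of_mem hTf hZf (⟨i, rfl⟩ : f i ∈ Set.range f)
          have hbc : b ≤ sSup (FIdx (Set.range f)) := le_csSup (bddAbove_FIdx _) hbF
          exact (Req_low_eq (H i) (by
            rw [deg_eq_of_isF hb]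
            exact le_trans (by exact_mod_cast hbc) hcα)).symm
        rw [hfe]
      · rw [Wsup_eq_WZ_unbdd hTf hZf hFf, deg_WZ] at h
        exact absurd h (by simp)

lemma Req_Wsup (H : ∀ i, Req α (f i) (g i)) :
    Req α (Wsup (Set.range f)) (Wsup (Set.range g)) := by
  by_cases h1 : deg (Wsup (Set.range f)) ≤ (α : WithTop Ordinal)
  · exact Or.inl ⟨(Req_Wsup_aux H h1).symm, h1⟩
  · by_cases h2 : deg (Wsup (Set.range g)) ≤ (α : WithTop Ordinal)
    · have := Req_Wsup_aux (fun i => Req_symm (H i)) h2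
      rw [this] at h1
      exact absurd h2 h1
    · exact Or.inr ⟨not_le.1 h1, not_le.1 h2⟩

lemma Req_Winf_aux (H : ∀ i, Req α (f i) (g i))
    (h : deg (Winf (Set.range f)) ≤ (α : WithTop Ordinal)) :
    Winf (Set.range g) = Winf (Set.range f) := by
  by_cases hFf : (FIdx (Set.range f)).Nonempty
  · have hs := Winf_isF hFf
    set a := sInf (FIdx (Set.range f)) with ha_def
    have haα : (a : WithTop Ordinal) ≤ (α : WithTop Ordinal) := by
      rw [deg_eq_of_isF hs] at h; exact h
    obtain ⟨w, ⟨i, rfl⟩, hw⟩ := csInf_mem hFf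
    have hgi : g i = f i :=
      (Req_low_eq (H i) (by rw [deg_eq_of_isF hw]; exact haα)).symm
    have hFg : (FIdx (Set.range g)).Nonempty :=
      ⟨a, mem_FIdx_of ⟨i, rfl⟩ (by rw [hgi]; exact hw)⟩
    have hs2 := Winf_isF hFg
    set b := sInf (FIdx (Set.range g)) with hb_def
    have hba : b ≤ a :=
      csInf_le (OrderBot.bddBelow _) (mem_FIdx_of ⟨i, rfl⟩ (by rw [hgi]; exact hw))
    obtain ⟨w2, ⟨j, rfl⟩, hw2⟩ := csInf_mem hFg
    have hdegj : deg (g j) ≤ (α : WithTop Ordinal) := by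
      rw [deg_eq_of_isF hw2]
      exact le_trans (by exact_mod_cast hba) haα
    have hfj : f j = g j := Req_low_eq' (H j) hdegj
    have hab : a ≤ b :=
      csInf_le (OrderBot.bddBelow _) (mem_FIdx_of ⟨j, rfl⟩ (by rw [hfj]; exact hw2))
    have : b = a := le_antisymm hba hab
    rw [this] at hs2
    exact isF_eq_isF hs2 hs
  · by_cases hZf : WZ ∈ Set.range f
    · rw [Winf_eq_WZ_zero hFf hZf, deg_WZ] at h
      exact absurd h (by simp)
    · by_cases hTf : sSup (TIdx (Set.range f)) < omega1
      · have hs := Winf_isT hFf hZf hTf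
        have hcα : ((sSup (TIdx (Set.range f)) : Ordinal) : WithTop Ordinal) ≤ (α : WithTop Ordinal) := by
          rw [deg_eq_of_isT hs] at h; exact h
        have hfe : g = f := by
          funext i
          obtain ⟨b, hb, hbT⟩ := isT_of_mem hFf hZf (⟨i, rfl⟩ : f i ∈ Set.range f)
          have hbc : b ≤ sSup (TIdx (Set.range f)) := le_csSup (bddAbove_TIdx _) hbT
          exact (Req_low_eq (H i) (by
            rw [deg_eq_of_isT hb]
            exact le_trans (by exact_mod_cast hbc) hcα)).symm
        rw [hfe]
      · rw [Winf_eq_WZ_unbdd hFf hZf hTf, deg_WZ] at h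
        exact absurd h (by simp)

lemma Req_Winf (H : ∀ i, Req α (f i) (g i)) :
    Req α (Winf (Set.range f)) (Winf (Set.range g)) := by
  by_cases h1 : deg (Winf (Set.range f)) ≤ (α : WithTop Ordinal)
  · exact Or.inl ⟨(Req_Winf_aux H h1).symm, h1⟩
  · by_cases h2 : deg (Winf (Set.range g)) ≤ (α : WithTop Ordinal)
    · have := Req_Winf_aux (fun i => Req_symm (H i)) h2
      rw [this] at h1
      exact absurd h2 h1
    · exact Or.inr ⟨not_le.1 h1, not_le.1 h2⟩

end ReqClosure

/-! ### `Wsup` and `Winf` are monotone with respect to `Rsq` -/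

lemma not_isF_WZ {a : Ordinal} : ¬ isF WZ a := fun h => TVPre.noConfusion h
lemma not_isT_WZ {a : Ordinal} : ¬ isT WZ a := fun h => TVPre.noConfusion h

lemma Rsq_high {α : Ordinal} {v w : W} (h : Rsq α v w)
    (hv : (α : WithTop Ordinal) < deg v) :
    (α : WithTop Ordinal) ≤ deg w ∧ ¬ isF w α := by
  rcases h with ⟨rfl, h1⟩ | ⟨h1, _⟩ | ⟨h1, _⟩ | ⟨_, h1, h2⟩
  · exact absurd hv (not_lt.2 h1.le)
  · rw [deg_eq_of_isF h1] at hv; exact absurd hv (lt_irrefl _)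
  · rw [deg_eq_of_isT h1] at hv; exact absurd hv (lt_irrefl _)
  · exact ⟨h1, h2⟩

lemma Rsq_F_deg {α : Ordinal} {v w : W} (h : Rsq α v w) (hv : isF v α) :
    (α : WithTop Ordinal) ≤ deg w := by
  rcases h with ⟨rfl, h1⟩ | ⟨_, h1⟩ | ⟨h1, _⟩ | ⟨h1, _, _⟩
  · rw [deg_eq_of_isF hv] at h1; exact absurd h1 (lt_irrefl _)
  · exact h1
  · exact absurd hv (fun hv => not_isF_isT hv h1)
  · rw [deg_eq_of_isF hv] at h1; exact absurd h1 (lt_irrefl _)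

lemma Wsup_high {α : Ordinal} {M : Set W} (h1 : ∀ a ∈ TIdx M, α ≤ a)
    (h2 : ∃ w ∈ M, (α : WithTop Ordinal) ≤ deg w ∧ ¬ isF w α) :
    (α : WithTop Ordinal) ≤ deg (Wsup M) ∧ ¬ isF (Wsup M) α := by
  by_cases hT : (TIdx M).Nonempty
  · have hs := Wsup_isT hT
    refine ⟨?_, fun hF => not_isF_isT hF hs⟩
    rw [deg_eq_of_isT hs]
    exact_mod_cast h1 _ (csInf_mem hT)
  · by_cases hZ : WZ ∈ M
    · rw [Wsup_eq_WZ_zero hT hZ, deg_WZ]; exact ⟨le_top, not_isF_WZ⟩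
    · obtain ⟨w, hwM, hwd, hwF⟩ := h2
      obtain ⟨e, hwe, heF⟩ := isF_of_mem hT hZ hwM
      have heα : α ≤ e := by
        rw [deg_eq_of_isF hwe] at hwd; exact_mod_cast hwd
      have heα' : α < e := lt_of_le_of_ne heα (fun h => hwF (h ▸ hwe))
      by_cases h3 : sSup (FIdx M) < omega1
      · have hs := Wsup_isF hT hZ h3
        have hαs : α < sSup (FIdx M) := lt_of_lt_of_le heα' (le_csSup (bddAbove_FIdx M) heF)
        exact ⟨by rw [deg_eq_of_isF hs]; exact_mod_cast hαs.le,
               fun hF => absurd (isF_inj hs hF) (ne_of_gt hαs)⟩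
      · rw [Wsup_eq_WZ_unbdd hT hZ h3, deg_WZ]; exact ⟨le_top, not_isF_WZ⟩

lemma Winf_high {α : Ordinal} {M : Set W} (h1 : ∀ a ∈ FIdx M, α < a)
    (h2 : ∃ w ∈ M, (α : WithTop Ordinal) ≤ deg w ∧ ¬ isF w α) :
    (α : WithTop Ordinal) ≤ deg (Winf M) ∧ ¬ isF (Winf M) α := by
  by_cases hF : (FIdx M).Nonempty
  · have hs := Winf_isF hF
    have hαs := h1 _ (csInf_mem hF)
    exact ⟨by rw [deg_eq_of_isF hs]; exact_mod_cast hαs.le,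
           fun hFa => absurd (isF_inj hs hFa) (ne_of_gt hαs)⟩
  · by_cases hZ : WZ ∈ M
    · rw [Winf_eq_WZ_zero hF hZ, deg_WZ]; exact ⟨le_top, not_isF_WZ⟩
    · obtain ⟨w, hwM, hwd, hwF⟩ := h2
      obtain ⟨e, hwe, heT⟩ := isT_of_mem hF hZ hwM
      have heα : α ≤ e := by
        rw [deg_eq_of_isT hwe] at hwd; exact_mod_cast hwd
      by_cases h3 : sSup (TIdx M) < omega1
      · have hs := Winf_isT hF hZ h3
        refine ⟨?_, fun hFa => not_isF_isT hFa hs⟩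
        rw [deg_eq_of_isT hs]
        exact_mod_cast le_trans heα (le_csSup (bddAbove_TIdx M) heT)
      · rw [Winf_eq_WZ_unbdd hF hZ h3, deg_WZ]; exact ⟨le_top, not_isF_WZ⟩

section RsqClosure

variable {ι : Type} {α : Ordinal} {f g : ι → W}

lemma Rsq_Wsup (hα : α < omega1) (H : ∀ i, Rsq α (f i) (g i)) :
    Rsq α (Wsup (Set.range f)) (Wsup (Set.range g)) := by
  have hTsmall : ∀ a ∈ TIdx (Set.range g), a < α → a ∈ TIdx (Set.range f) := by
    rintro a ⟨w, ⟨j, rfl⟩, hw⟩ haα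
    have hj : g j = f j := Rsq_low_eq' (H j) (by rw [deg_eq_of_isT hw]; exact_mod_cast haα)
    exact ⟨f j, ⟨j, rfl⟩, by rw [hj] at hw; exact hw⟩
  by_cases hTf : (TIdx (Set.range f)).Nonempty
  · have hs := Wsup_isT hTf
    obtain ⟨w, ⟨i, rfl⟩, hw⟩ := csInf_mem hTf
    rcases lt_trichotomy (sInf (TIdx (Set.range f))) α with hlt | heq | hgt
    · have hgi : g i = f i := Rsq_low_eq (H i) (by rw [deg_eq_of_isT hw]; exact_mod_cast hlt)
      have hmemg : sInf (TIdx (Set.range f)) ∈ TIdx (Set.range g) :=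
        ⟨g i, ⟨i, rfl⟩, by rw [hgi]; exact hw⟩
      have hTg : (TIdx (Set.range g)).Nonempty := ⟨_, hmemg⟩
      have hs2 := Wsup_isT hTg
      have hba : sInf (TIdx (Set.range g)) ≤ sInf (TIdx (Set.range f)) :=
        csInf_le (OrderBot.bddBelow _) hmemg
      have hab : sInf (TIdx (Set.range f)) ≤ sInf (TIdx (Set.range g)) := by
        rcases lt_or_ge (sInf (TIdx (Set.range g))) α with h' | h'
        · exact csInf_le (OrderBot.bddBelow _) (hTsmall _ (csInf_mem hTg) h')
        · exact le_trans hlt.le h'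
      rw [le_antisymm hba hab] at hs2
      exact Or.inl ⟨isT_eq_isT hs hs2, by rw [deg_eq_of_isT hs]; exact_mod_cast hlt⟩
    · have hwα : isT (f i) α := heq ▸ hw
      have hgT : isT (g i) α := Rsq_T (H i) hwα
      have hmemg : α ∈ TIdx (Set.range g) := ⟨g i, ⟨i, rfl⟩, hgT⟩
      have hTg : (TIdx (Set.range g)).Nonempty := ⟨_, hmemg⟩
      have hs2 := Wsup_isT hTg
      have hbα : sInf (TIdx (Set.range g)) ≤ α := csInf_le (OrderBot.bddBelow _) hmemg
      have hb2 : α ≤ sInf (TIdx (Set.range g)) := by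
        by_contra hcon
        push_neg at hcon
        have hmem := hTsmall _ (csInf_mem hTg) hcon
        have h2 := csInf_le (OrderBot.bddBelow _) hmem
        rw [heq] at h2
        exact absurd h2 (not_le.2 hcon)
      rw [le_antisymm hbα hb2] at hs2
      exact Or.inr (Or.inr (Or.inl ⟨heq ▸ hs, hs2⟩))
    · have hh1 : ∀ b ∈ TIdx (Set.range g), α ≤ b := by
        intro b hb
        by_contra hcon
        push_neg at hcon
        have := csInf_le (OrderBot.bddBelow _) (hTsmall _ hb hcon)
        exact absurd (lt_of_le_of_lt this hcon) (not_lt.2 hgt.le)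
      have hh2 : ∃ w ∈ Set.range g, (α : WithTop Ordinal) ≤ deg w ∧ ¬ isF w α :=
        ⟨g i, ⟨i, rfl⟩, Rsq_high (H i) (by rw [deg_eq_of_isT hw]; exact_mod_cast hgt)⟩
      obtain ⟨c1, c2⟩ := Wsup_high hh1 hh2
      exact Or.inr (Or.inr (Or.inr
        ⟨by rw [deg_eq_of_isT hs]; exact_mod_cast hgt, c1, c2⟩))
  · by_cases hZf : WZ ∈ Set.range f
    · have hv := Wsup_eq_WZ_zero hTf hZf
      obtain ⟨i, hi⟩ := hZf
      have hh1 : ∀ b ∈ TIdx (Set.range g), α ≤ b := fun b hb =>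
        le_of_not_gt fun h => hTf ⟨b, hTsmall b hb h⟩
      have hh2 : ∃ w ∈ Set.range g, (α : WithTop Ordinal) ≤ deg w ∧ ¬ isF w α :=
        ⟨g i, ⟨i, rfl⟩, Rsq_high (H i) (by rw [hi, deg_WZ]; exact WithTop.coe_lt_top α)⟩
      obtain ⟨c1, c2⟩ := Wsup_high hh1 hh2
      exact Or.inr (Or.inr (Or.inr
        ⟨by rw [hv, deg_WZ]; exact WithTop.coe_lt_top α, c1, c2⟩))
    · by_cases hFf : sSup (FIdx (Set.range f)) < omega1
      · have hs := Wsup_isF hTf hZf hFf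
        rcases lt_trichotomy (sSup (FIdx (Set.range f))) α with hlt | heq | hgt
        · have hfe : g = f := by
            funext i
            obtain ⟨b, hb, hbF⟩ := isF_of_mem hTf hZf (⟨i, rfl⟩ : f i ∈ Set.range f)
            have hbc : b ≤ sSup (FIdx (Set.range f)) := le_csSup (bddAbove_FIdx _) hbF
            exact Rsq_low_eq (H i)
              (by rw [deg_eq_of_isF hb]; exact_mod_cast lt_of_le_of_lt hbc hlt)
          rw [hfe]
          exact Or.inl ⟨rfl, by rw [deg_eq_of_isF hs]; exact_mod_cast hlt⟩
        · refine Or.inr (Or.inl ⟨heq ▸ hs, ?_⟩)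
          by_cases hTg : (TIdx (Set.range g)).Nonempty
          · have hs2 := Wsup_isT hTg
            rw [deg_eq_of_isT hs2]
            exact_mod_cast le_of_not_gt fun h => hTf ⟨_, hTsmall _ (csInf_mem hTg) h⟩
          · by_cases hZg : WZ ∈ Set.range g
            · rw [Wsup_eq_WZ_zero hTg hZg, deg_WZ]; exact le_top
            · by_cases hFg : sSup (FIdx (Set.range g)) < omega1
              · have hs2 := Wsup_isF hTg hZg hFg
                rw [deg_eq_of_isF hs2]
                have key : ∀ b ∈ FIdx (Set.range f), b ≤ sSup (FIdx (Set.range g)) := by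
                  rintro b ⟨w, ⟨i, rfl⟩, hbw⟩
                  have hbα : b ≤ α := by
                    rw [← heq]
                    exact le_csSup (bddAbove_FIdx _) ⟨f i, ⟨i, rfl⟩, hbw⟩
                  rcases lt_or_eq_of_le hbα with hb | hb
                  · have hgi : g i = f i :=
                      Rsq_low_eq (H i) (by rw [deg_eq_of_isF hbw]; exact_mod_cast hb)
                    exact le_csSup (bddAbove_FIdx _) ⟨g i, ⟨i, rfl⟩, by rw [hgi]; exact hbw⟩
                  · subst hb
                    have hdg := Rsq_F_deg (H i) hbw
                    obtain ⟨e, he, heF⟩ := isF_of_mem hTg hZg (⟨i, rfl⟩ : g i ∈ Set.range g)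
                    have hbe : b ≤ e := by
                      rw [deg_eq_of_isF he] at hdg; exact_mod_cast hdg
                    exact le_trans hbe (le_csSup (bddAbove_FIdx _) heF)
                rcases (FIdx (Set.range f)).eq_empty_or_nonempty with hemp | hne
                · have : α = 0 := by rw [← heq, hemp, csSup_empty]; rfl
                  rw [this]
                  exact_mod_cast zero_le
                · rw [← heq]
                  exact_mod_cast csSup_le hne key
              · rw [Wsup_eq_WZ_unbdd hTg hZg hFg, deg_WZ]; exact le_top
        · obtain ⟨b, hbF, hbα⟩ := exists_lt_mem_of_lt_csSup hgt
          obtain ⟨w, ⟨i, rfl⟩, hbw⟩ := hbF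
          have hh1 : ∀ b ∈ TIdx (Set.range g), α ≤ b := fun b hb =>
            le_of_not_gt fun h => hTf ⟨b, hTsmall b hb h⟩
          have hh2 : ∃ w ∈ Set.range g, (α : WithTop Ordinal) ≤ deg w ∧ ¬ isF w α :=
            ⟨g i, ⟨i, rfl⟩, Rsq_high (H i) (by rw [deg_eq_of_isF hbw]; exact_mod_cast hbα)⟩
          obtain ⟨c1, c2⟩ := Wsup_high hh1 hh2
          exact Or.inr (Or.inr (Or.inr
            ⟨by rw [deg_eq_of_isF hs]; exact_mod_cast hgt, c1, c2⟩))
      · have hv := Wsup_eq_WZ_unbdd hTf hZf hFf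
        obtain ⟨b, hbF, hbα⟩ := exists_mem_gt_of_unbdd hFf hα
        obtain ⟨w, ⟨i, rfl⟩, hbw⟩ := hbF
        have hh1 : ∀ b ∈ TIdx (Set.range g), α ≤ b := fun b hb =>
          le_of_not_gt fun h => hTf ⟨b, hTsmall b hb h⟩
        have hh2 : ∃ w ∈ Set.range g, (α : WithTop Ordinal) ≤ deg w ∧ ¬ isF w α :=
          ⟨g i, ⟨i, rfl⟩, Rsq_high (H i) (by rw [deg_eq_of_isF hbw]; exact_mod_cast hbα)⟩
        obtain ⟨c1, c2⟩ := Wsup_high hh1 hh2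
        exact Or.inr (Or.inr (Or.inr
          ⟨by rw [hv, deg_WZ]; exact WithTop.coe_lt_top α, c1, c2⟩))

lemma Rsq_Winf (hα : α < omega1) (H : ∀ i, Rsq α (f i) (g i)) :
    Rsq α (Winf (Set.range f)) (Winf (Set.range g)) := by
  have hFsmall : ∀ a ∈ FIdx (Set.range g), a < α → a ∈ FIdx (Set.range f) := by
    rintro a ⟨w, ⟨j, rfl⟩, hw⟩ haα
    have hj : g j = f j := Rsq_low_eq' (H j) (by rw [deg_eq_of_isF hw]; exact_mod_cast haα)
    exact ⟨f j, ⟨j, rfl⟩, by rw [hj] at hw; exact hw⟩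
  have hFalpha : α ∈ FIdx (Set.range g) → α ∈ FIdx (Set.range f) := by
    rintro ⟨w, ⟨j, rfl⟩, hw⟩
    exact ⟨f j, ⟨j, rfl⟩, Rsq_F (H j) hw⟩
  by_cases hFf : (FIdx (Set.range f)).Nonempty
  · have hs := Winf_isF hFf
    obtain ⟨w, ⟨i, rfl⟩, hw⟩ := csInf_mem hFf
    rcases lt_trichotomy (sInf (FIdx (Set.range f))) α with hlt | heq | hgt
    · have hgi : g i = f i := Rsq_low_eq (H i) (by rw [deg_eq_of_isF hw]; exact_mod_cast hlt)
      have hmemg : sInf (FIdx (Set.range f)) ∈ FIdx (Set.range g) :=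
        ⟨g i, ⟨i, rfl⟩, by rw [hgi]; exact hw⟩
      have hFg : (FIdx (Set.range g)).Nonempty := ⟨_, hmemg⟩
      have hs2 := Winf_isF hFg
      have hba : sInf (FIdx (Set.range g)) ≤ sInf (FIdx (Set.range f)) :=
        csInf_le (OrderBot.bddBelow _) hmemg
      have hab : sInf (FIdx (Set.range f)) ≤ sInf (FIdx (Set.range g)) := by
        rcases lt_or_ge (sInf (FIdx (Set.range g))) α with h' | h'
        · exact csInf_le (OrderBot.bddBelow _) (hFsmall _ (csInf_mem hFg) h')
        · exact le_trans hlt.le h'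
      rw [le_antisymm hba hab] at hs2
      exact Or.inl ⟨isF_eq_isF hs hs2, by rw [deg_eq_of_isF hs]; exact_mod_cast hlt⟩
    · refine Or.inr (Or.inl ⟨heq ▸ hs, ?_⟩)
      by_cases hFg : (FIdx (Set.range g)).Nonempty
      · have hs2 := Winf_isF hFg
        rw [deg_eq_of_isF hs2]
        have : α ≤ sInf (FIdx (Set.range g)) := by
          by_contra hcon
          push_neg at hcon
          have h2 := csInf_le (OrderBot.bddBelow _) (hFsmall _ (csInf_mem hFg) hcon)
          rw [heq] at h2
          exact absurd h2 (not_le.2 hcon)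
        exact_mod_cast this
      · by_cases hZg : WZ ∈ Set.range g
        · rw [Winf_eq_WZ_zero hFg hZg, deg_WZ]; exact le_top
        · by_cases hTg : sSup (TIdx (Set.range g)) < omega1
          · have hs2 := Winf_isT hFg hZg hTg
            rw [deg_eq_of_isT hs2]
            have hwα : isF (f i) α := heq ▸ hw
            have hdg := Rsq_F_deg (H i) hwα
            obtain ⟨e, he, heT⟩ := isT_of_mem hFg hZg (⟨i, rfl⟩ : g i ∈ Set.range g)
            have hαe : α ≤ e := by
              rw [deg_eq_of_isT he] at hdg; exact_mod_cast hdg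
            exact_mod_cast le_trans hαe (le_csSup (bddAbove_TIdx _) heT)
          · rw [Winf_eq_WZ_unbdd hFg hZg hTg, deg_WZ]; exact le_top
    · have hh1 : ∀ b ∈ FIdx (Set.range g), α < b := by
        intro b hb
        rcases lt_trichotomy b α with h' | h' | h'
        · have := csInf_le (OrderBot.bddBelow _) (hFsmall _ hb h')
          exact absurd (lt_of_le_of_lt this h') (not_lt.2 hgt.le)
        · subst h'
          have := csInf_le (OrderBot.bddBelow _) (hFalpha hb)
          exact absurd hgt (not_lt.2 this)
        · exact h'
      have hh2 : ∃ w ∈ Set.range g, (α : WithTop Ordinal) ≤ deg w ∧ ¬ isF w α :=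
        ⟨g i, ⟨i, rfl⟩, Rsq_high (H i) (by rw [deg_eq_of_isF hw]; exact_mod_cast hgt)⟩
      obtain ⟨c1, c2⟩ := Winf_high hh1 hh2
      exact Or.inr (Or.inr (Or.inr
        ⟨by rw [deg_eq_of_isF hs]; exact_mod_cast hgt, c1, c2⟩))
  · by_cases hZf : WZ ∈ Set.range f
    · have hv := Winf_eq_WZ_zero hFf hZf
      obtain ⟨i, hi⟩ := hZf
      have hh1 : ∀ b ∈ FIdx (Set.range g), α < b := by
        intro b hb
        rcases lt_trichotomy b α with h' | h' | h'
        · exact absurd ⟨b, hFsmall _ hb h'⟩ hFf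
        · subst h'; exact absurd ⟨b, hFalpha hb⟩ hFf
        · exact h'
      have hh2 : ∃ w ∈ Set.range g, (α : WithTop Ordinal) ≤ deg w ∧ ¬ isF w α :=
        ⟨g i, ⟨i, rfl⟩, Rsq_high (H i) (by rw [hi, deg_WZ]; exact WithTop.coe_lt_top α)⟩
      obtain ⟨c1, c2⟩ := Winf_high hh1 hh2
      exact Or.inr (Or.inr (Or.inr
        ⟨by rw [hv, deg_WZ]; exact WithTop.coe_lt_top α, c1, c2⟩))
    · by_cases hTf : sSup (TIdx (Set.range f)) < omega1
      · have hs := Winf_isT hFf hZf hTf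
        rcases lt_trichotomy (sSup (TIdx (Set.range f))) α with hlt | heq | hgt
        · have hfe : g = f := by
            funext i
            obtain ⟨b, hb, hbT⟩ := isT_of_mem hFf hZf (⟨i, rfl⟩ : f i ∈ Set.range f)
            have hbc : b ≤ sSup (TIdx (Set.range f)) := le_csSup (bddAbove_TIdx _) hbT
            exact Rsq_low_eq (H i)
              (by rw [deg_eq_of_isT hb]; exact_mod_cast lt_of_le_of_lt hbc hlt)
          rw [hfe]
          exact Or.inl ⟨rfl, by rw [deg_eq_of_isT hs]; exact_mod_cast hlt⟩
        · -- sSup (TIdx f) = α : both infima are `T α`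
          have hgT : ∀ i : ι, ∃ b ≤ α, isT (g i) b := by
            intro i
            obtain ⟨b, hb, hbT⟩ := isT_of_mem hFf hZf (⟨i, rfl⟩ : f i ∈ Set.range f)
            have hbα : b ≤ α := by
              rw [← heq]; exact le_csSup (bddAbove_TIdx _) hbT
            rcases lt_or_eq_of_le hbα with h' | h'
            · have hgi : g i = f i :=
                Rsq_low_eq (H i) (by rw [deg_eq_of_isT hb]; exact_mod_cast h')
              exact ⟨b, hbα, by rw [hgi]; exact hb⟩
            · subst h'
              exact ⟨b, le_refl b, Rsq_T (H i) hb⟩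
          have hFg : ¬ (FIdx (Set.range g)).Nonempty := by
            rintro ⟨e, w, ⟨i, rfl⟩, hew⟩
            obtain ⟨b, _, hbT⟩ := hgT i
            exact not_isF_isT hew hbT
          have hZg : WZ ∉ Set.range g := by
            rintro ⟨i, hi⟩
            obtain ⟨b, _, hbT⟩ := hgT i
            rw [hi] at hbT
            exact not_isT_WZ hbT
          have hTgb : ∀ e ∈ TIdx (Set.range g), e ≤ α := by
            rintro e ⟨w, ⟨i, rfl⟩, hew⟩
            obtain ⟨b, hbα, hbT⟩ := hgT i
            rw [isT_inj hew hbT]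
            exact hbα
          have hTgle : sSup (TIdx (Set.range g)) ≤ α := by
            rcases (TIdx (Set.range g)).eq_empty_or_nonempty with hemp | hne
            · rw [hemp, csSup_empty]; exact (zero_le (a := α))
            · exact csSup_le hne hTgb
          have hTgge : α ≤ sSup (TIdx (Set.range g)) := by
            by_cases hat : ∃ i, isT (f i) α
            · obtain ⟨i, hi⟩ := hat
              exact le_csSup (bddAbove_TIdx _) ⟨g i, ⟨i, rfl⟩, Rsq_T (H i) hi⟩
            · push_neg at hat
              have hsub : TIdx (Set.range f) ⊆ TIdx (Set.range g) := by
                rintro b ⟨w, ⟨i, rfl⟩, hbw⟩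
                have hbα : b ≤ α := by
                  rw [← heq]; exact le_csSup (bddAbove_TIdx _) ⟨f i, ⟨i, rfl⟩, hbw⟩
                have hblt : b < α := lt_of_le_of_ne hbα (fun h => hat i (h ▸ hbw))
                have hgi : g i = f i :=
                  Rsq_low_eq (H i) (by rw [deg_eq_of_isT hbw]; exact_mod_cast hblt)
                exact ⟨g i, ⟨i, rfl⟩, by rw [hgi]; exact hbw⟩
              rcases (TIdx (Set.range f)).eq_empty_or_nonempty with hemp | hne
              · rw [← heq, hemp, csSup_empty]
                exact zero_le
              · rw [← heq]
                exact csSup_le_csSup (bddAbove_TIdx _) hne hsub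
          have hTgα : sSup (TIdx (Set.range g)) = α := le_antisymm hTgle hTgge
          have hs2 := Winf_isT hFg hZg (by rw [hTgα]; exact hα)
          rw [hTgα] at hs2
          exact Or.inr (Or.inr (Or.inl ⟨heq ▸ hs, hs2⟩))
        · obtain ⟨b, hbT, hbα⟩ := exists_lt_mem_of_lt_csSup hgt
          obtain ⟨w, ⟨i, rfl⟩, hbw⟩ := hbT
          have hh1 : ∀ b ∈ FIdx (Set.range g), α < b := by
            intro b hb
            rcases lt_trichotomy b α with h' | h' | h'
            · exact absurd ⟨b, hFsmall _ hb h'⟩ hFf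
            · subst h'; exact absurd ⟨b, hFalpha hb⟩ hFf
            · exact h'
          have hh2 : ∃ w ∈ Set.range g, (α : WithTop Ordinal) ≤ deg w ∧ ¬ isF w α :=
            ⟨g i, ⟨i, rfl⟩, Rsq_high (H i) (by rw [deg_eq_of_isT hbw]; exact_mod_cast hbα)⟩
          obtain ⟨c1, c2⟩ := Winf_high hh1 hh2
          exact Or.inr (Or.inr (Or.inr
            ⟨by rw [deg_eq_of_isT hs]; exact_mod_cast hgt, c1, c2⟩))
      · have hv := Winf_eq_WZ_unbdd hFf hZf hTf
        obtain ⟨b, hbT, hbα⟩ := exists_mem_gt_of_unbdd hTf hα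
        obtain ⟨w, ⟨i, rfl⟩, hbw⟩ := hbT
        have hh1 : ∀ b ∈ FIdx (Set.range g), α < b := by
          intro b hb
          rcases lt_trichotomy b α with h' | h' | h'
          · exact absurd ⟨b, hFsmall _ hb h'⟩ hFf
          · subst h'; exact absurd ⟨b, hFalpha hb⟩ hFf
          · exact h'
        have hh2 : ∃ w ∈ Set.range g, (α : WithTop Ordinal) ≤ deg w ∧ ¬ isF w α :=
          ⟨g i, ⟨i, rfl⟩, Rsq_high (H i) (by rw [deg_eq_of_isT hbw]; exact_mod_cast hbα)⟩
        obtain ⟨c1, c2⟩ := Winf_high hh1 hh2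
        exact Or.inr (Or.inr (Or.inr
          ⟨by rw [hv, deg_WZ]; exact WithTop.coe_lt_top α, c1, c2⟩))

end RsqClosure

/-! ### closure of `Req`/`Rsq` under negation, min and max -/

lemma Wneg_WF {a : Ordinal} {h : a < omega1} :
    Wneg (WF a h) = WT (a + 1) (succ_lt_omega1 h) := rfl
lemma Wneg_WT {a : Ordinal} {h : a < omega1} :
    Wneg (WT a h) = WF (a + 1) (succ_lt_omega1 h) := rfl
lemma Wneg_WZ : Wneg WZ = WZ := rfl

lemma Wneg_high {α : Ordinal} {w : W} (h : (α : WithTop Ordinal) ≤ deg w) :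
    (α : WithTop Ordinal) < deg (Wneg w) ∧ ¬ isF (Wneg w) α := by
  rcases W.cases w with ⟨a, ha, rfl⟩ | rfl | ⟨a, ha, rfl⟩
  · rw [deg_WF] at h
    have hαa : α ≤ a := by exact_mod_cast h
    refine ⟨?_, fun hF => not_isF_isT hF (Wneg_WF ▸ isT_WT)⟩
    rw [Wneg_WF, deg_WT]
    exact_mod_cast lt_of_le_of_lt hαa (lt_add_one a)
  · rw [Wneg_WZ, deg_WZ]; exact ⟨WithTop.coe_lt_top α, not_isF_WZ⟩
  · rw [deg_WT] at h
    have hαa : α ≤ a := by exact_mod_cast h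
    have haa : α < a + 1 := lt_of_le_of_lt hαa (lt_add_one a)
    refine ⟨?_, fun hF => ?_⟩
    · rw [Wneg_WT, deg_WF]
      exact_mod_cast haa
    · rw [Wneg_WT] at hF
      exact absurd (isF_inj isF_WF hF).symm (ne_of_lt haa)

lemma Req_Wneg {α : Ordinal} {v w : W} (h : Req α v w) : Req α (Wneg v) (Wneg w) := by
  rcases h with ⟨rfl, _⟩ | ⟨h1, h2⟩
  · exact Req_refl _ _
  · exact Or.inr ⟨(Wneg_high h1.le).1, (Wneg_high h2.le).1⟩

lemma Rsq_Wneg {α : Ordinal} {v w : W} (h : Rsq α v w) : Rsq α (Wneg v) (Wneg w) := by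
  rcases h with ⟨rfl, _⟩ | ⟨h1, h2⟩ | ⟨h1, h2⟩ | ⟨h1, h2, _⟩
  · exact Rsq_refl _ _
  · refine Or.inr (Or.inr (Or.inr ?_))
    obtain ⟨c1, c2⟩ := Wneg_high h2
    exact ⟨(Wneg_high (le_of_eq (deg_eq_of_isF h1).symm)).1, c1.le, c2⟩
  · rw [isT_eq_isT h1 h2]
    exact Rsq_refl _ _
  · refine Or.inr (Or.inr (Or.inr ?_))
    obtain ⟨c1, c2⟩ := Wneg_high h2
    exact ⟨(Wneg_high h1.le).1, c1.le, c2⟩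

/-- `Winf` is a lower bound. -/
lemma Winf_le {M : Set W} {w : W} (hw : w ∈ M) : Winf M ≤ w := by
  by_cases h1 : (FIdx M).Nonempty
  · obtain ⟨hh, he⟩ := isF_iff.1 (Winf_isF h1)
    rw [he]
    rcases W.cases w with ⟨a, ha, rfl⟩ | rfl | ⟨a, ha, rfl⟩
    · exact WF_le_WF_iff.2 (csInf_le (OrderBot.bddBelow _) (mem_FIdx_of hw isF_WF))
    · exact le_of_lt WF_lt_WZ
    · exact le_of_lt WF_lt_WT
  · by_cases h2 : WZ ∈ M
    · rw [Winf_eq_WZ_zero h1 h2]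
      rcases W.cases w with ⟨a, ha, rfl⟩ | rfl | ⟨a, ha, rfl⟩
      · exact absurd ⟨a, mem_FIdx_of hw isF_WF⟩ h1
      · exact le_refl _
      · exact le_of_lt WZ_lt_WT
    · obtain ⟨a, haw, haT⟩ := isT_of_mem h1 h2 hw
      obtain ⟨hh, he⟩ := isT_iff.1 haw
      rw [he]
      by_cases h3 : sSup (TIdx M) < omega1
      · obtain ⟨hh2, he2⟩ := isT_iff.1 (Winf_isT h1 h2 h3)
        rw [he2]
        exact WT_le_WT_iff.2 (le_csSup (bddAbove_TIdx M) haT)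
      · rw [Winf_eq_WZ_unbdd h1 h2 h3]
        exact le_of_lt WZ_lt_WT

/-- `Winf` is the greatest lower bound. -/
lemma le_Winf {M : Set W} {x : W} (h : ∀ w ∈ M, x ≤ w) : x ≤ Winf M := by
  by_cases h1 : (FIdx M).Nonempty
  · obtain ⟨w0, hw0, hw0F⟩ := csInf_mem h1
    obtain ⟨hh, he⟩ := isF_iff.1 (show isF w0 (sInf (FIdx M)) from hw0F)
    obtain ⟨hh2, he2⟩ := isF_iff.1 (Winf_isF h1)
    rw [he2, ← he]
    exact h w0 hw0
  · by_cases h2 : WZ ∈ M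
    · rw [Winf_eq_WZ_zero h1 h2]
      exact h WZ h2
    · by_cases h3 : sSup (TIdx M) < omega1
      · obtain ⟨hh2, he2⟩ := isT_iff.1 (Winf_isT h1 h2 h3)
        rw [he2]
        rcases W.cases x with ⟨a, ha, rfl⟩ | rfl | ⟨a, ha, rfl⟩
        · exact le_of_lt WF_lt_WT
        · exact le_of_lt WZ_lt_WT
        · refine WT_le_WT_iff.2 ?_
          rcases (TIdx M).eq_empty_or_nonempty with hemp | hne
          · rw [hemp, csSup_empty]; exact (zero_le (a := a))
          · refine csSup_le hne ?_
            rintro b ⟨w, hwM, hwT⟩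
            obtain ⟨hb, rfl⟩ := isT_iff.1 (show isT w b from hwT)
            exact WT_le_WT_iff.1 (h _ hwM)
      · rw [Winf_eq_WZ_unbdd h1 h2 h3]
        rcases W.cases x with ⟨a, ha, rfl⟩ | rfl | ⟨a, ha, rfl⟩
        · exact le_of_lt WF_lt_WZ
        · exact le_refl _
        · exfalso
          refine h3 ?_
          refine lt_of_le_of_lt (csSup_le ?_ ?_) ha
          · by_contra hemp
            rw [Set.not_nonempty_iff_eq_empty] at hemp
            refine h3 ?_
            rw [hemp, csSup_empty]
            exact zero_lt_omega1
          · rintro b ⟨w, hwM, hwT⟩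
            obtain ⟨hb, rfl⟩ := isT_iff.1 (show isT w b from hwT)
            exact WT_le_WT_iff.1 (h _ hwM)

/-- `Wsup` is the least upper bound. -/
lemma Wsup_le {M : Set W} {x : W} (h : ∀ w ∈ M, w ≤ x) : Wsup M ≤ x := by
  by_cases h1 : (TIdx M).Nonempty
  · obtain ⟨w0, hw0, hw0T⟩ := csInf_mem h1
    obtain ⟨hh, he⟩ := isT_iff.1 (show isT w0 (sInf (TIdx M)) from hw0T)
    obtain ⟨hh2, he2⟩ := isT_iff.1 (Wsup_isT h1)
    rw [he2, ← he]
    exact h w0 hw0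
  · by_cases h2 : WZ ∈ M
    · rw [Wsup_eq_WZ_zero h1 h2]
      exact h WZ h2
    · by_cases h3 : sSup (FIdx M) < omega1
      · obtain ⟨hh2, he2⟩ := isF_iff.1 (Wsup_isF h1 h2 h3)
        rw [he2]
        rcases W.cases x with ⟨a, ha, rfl⟩ | rfl | ⟨a, ha, rfl⟩
        · refine WF_le_WF_iff.2 ?_
          rcases (FIdx M).eq_empty_or_nonempty with hemp | hne
          · rw [hemp, csSup_empty]; exact (zero_le (a := a))
          · refine csSup_le hne ?_
            rintro b ⟨w, hwM, hwF⟩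
            obtain ⟨hb, rfl⟩ := isF_iff.1 (show isF w b from hwF)
            exact WF_le_WF_iff.1 (h _ hwM)
        · exact le_of_lt WF_lt_WZ
        · exact le_of_lt WF_lt_WT
      · rw [Wsup_eq_WZ_unbdd h1 h2 h3]
        rcases W.cases x with ⟨a, ha, rfl⟩ | rfl | ⟨a, ha, rfl⟩
        · exfalso
          refine h3 ?_
          refine lt_of_le_of_lt (csSup_le ?_ ?_) ha
          · by_contra hemp
            rw [Set.not_nonempty_iff_eq_empty] at hemp
            refine h3 ?_
            rw [hemp, csSup_empty]
            exact zero_lt_omega1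
          · rintro b ⟨w, hwM, hwF⟩
            obtain ⟨hb, rfl⟩ := isF_iff.1 (show isF w b from hwF)
            exact WF_le_WF_iff.1 (h _ hwM)
        · exact le_refl _
        · exact le_of_lt WZ_lt_WT

lemma range_cond (v1 v2 : W) :
    Set.range (fun b : Bool => cond b v1 v2) = {v1, v2} := by
  ext w
  constructor
  · rintro ⟨b, rfl⟩
    cases b
    · exact Or.inr rfl
    · exact Or.inl rfl
  · rintro (rfl | rfl)
    · exact ⟨true, rfl⟩
    · exact ⟨false, rfl⟩

lemma min_eq_Winf (v1 v2 : W) :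
    min v1 v2 = Winf (Set.range fun b : Bool => cond b v1 v2) := by
  rw [range_cond]
  refine le_antisymm ?_ ?_
  · refine le_Winf ?_
    rintro w (rfl | rfl)
    · exact min_le_left _ _
    · exact min_le_right _ _
  · rcases min_choice v1 v2 with h | h <;> rw [h]
    · exact Winf_le (Or.inl rfl)
    · exact Winf_le (Or.inr rfl)

lemma max_eq_Wsup (v1 v2 : W) :
    max v1 v2 = Wsup (Set.range fun b : Bool => cond b v1 v2) := by
  rw [range_cond]
  refine le_antisymm ?_ ?_
  · rcases max_choice v1 v2 with h | h <;> rw [h]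
    · exact le_Wsup (Or.inl rfl)
    · exact le_Wsup (Or.inr rfl)
  · refine Wsup_le ?_
    rintro w (rfl | rfl)
    · exact le_max_left _ _
    · exact le_max_right _ _

lemma Req_min {α : Ordinal} {v1 v2 w1 w2 : W} (h1 : Req α v1 w1) (h2 : Req α v2 w2) :
    Req α (min v1 v2) (min w1 w2) := by
  rw [min_eq_Winf v1 v2, min_eq_Winf w1 w2]
  exact Req_Winf (fun b => by cases b <;> assumption)

lemma Req_max {α : Ordinal} {v1 v2 w1 w2 : W} (h1 : Req α v1 w1) (h2 : Req α v2 w2) :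
    Req α (max v1 v2) (max w1 w2) := by
  rw [max_eq_Wsup v1 v2, max_eq_Wsup w1 w2]
  exact Req_Wsup (fun b => by cases b <;> assumption)

lemma Rsq_min {α : Ordinal} (hα : α < omega1) {v1 v2 w1 w2 : W}
    (h1 : Rsq α v1 w1) (h2 : Rsq α v2 w2) : Rsq α (min v1 v2) (min w1 w2) := by
  rw [min_eq_Winf v1 v2, min_eq_Winf w1 w2]
  exact Rsq_Winf hα (fun b => by cases b <;> assumption)

lemma Rsq_max {α : Ordinal} (hα : α < omega1) {v1 v2 w1 w2 : W}
    (h1 : Rsq α v1 w1) (h2 : Rsq α v2 w2) : Rsq α (max v1 v2) (max w1 w2) := by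
  rw [max_eq_Wsup v1 v2, max_eq_Wsup w1 w2]
  exact Rsq_Wsup hα (fun b => by cases b <;> assumption)

/-! ### pointwise characterisations of `eqa` and `sqa`; evaluation respects them -/

lemma mem_Ifalse_iff {I : Interp L} {A : GroundAtom L} {β : Ordinal} :
    A ∈ Ifalse I β ↔ isF (I A) β := Iff.rfl

lemma mem_Itrue_iff {I : Interp L} {A : GroundAtom L} {β : Ordinal} :
    A ∈ Itrue I β ↔ isT (I A) β := Iff.rfl

lemma deg_le_cases {w : W} {α : Ordinal} (h : deg w ≤ (α : WithTop Ordinal)) :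
    ∃ a : Ordinal, a ≤ α ∧ deg w = (a : WithTop Ordinal) ∧ (isF w a ∨ isT w a) := by
  obtain ⟨a, _, hd⟩ := deg_lt_top_cases (fun ht => by rw [ht] at h; exact absurd h (by simp))
  exact ⟨a, by exact_mod_cast hd ▸ h, hd, deg_eq_cases hd⟩

lemma eqa_iff {α : Ordinal} {I J : Interp L} :
    eqa α I J ↔ ∀ A, Req α (I A) (J A) := by
  constructor
  · intro h A
    rcases le_or_gt (deg (I A)) (α : WithTop Ordinal) with hle | hlt
    · obtain ⟨a, haα, hda, hFT⟩ := deg_le_cases hle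
      rcases hFT with hF | hT
      · have : A ∈ Ifalse J a := (h a haα).1 ▸ hF
        exact Or.inl ⟨isF_eq_isF hF this, hle⟩
      · have : A ∈ Itrue J a := (h a haα).2 ▸ hT
        exact Or.inl ⟨isT_eq_isT hT this, hle⟩
    · refine Or.inr ⟨hlt, ?_⟩
      by_contra hcon
      push_neg at hcon
      obtain ⟨a, haα, hda, hFT⟩ := deg_le_cases hcon
      rcases hFT with hF | hT
      · have : A ∈ Ifalse I a := (h a haα).1.symm ▸ hF
        rw [deg_eq_of_isF this] at hlt
        exact absurd (lt_of_lt_of_le hlt (by exact_mod_cast haα)) (lt_irrefl _)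
      · have : A ∈ Itrue I a := (h a haα).2.symm ▸ hT
        rw [deg_eq_of_isT this] at hlt
        exact absurd (lt_of_lt_of_le hlt (by exact_mod_cast haα)) (lt_irrefl _)
  · intro h β hβ
    constructor
    · ext A
      constructor
      · intro hF
        have := Req_low_eq (h A)
          (by rw [deg_eq_of_isF hF]; exact_mod_cast hβ)
        exact mem_Ifalse_iff.2 (this ▸ (mem_Ifalse_iff.1 hF))
      · intro hF
        have := Req_low_eq' (h A)
          (by rw [deg_eq_of_isF hF]; exact_mod_cast hβ)
        exact mem_Ifalse_iff.2 (this ▸ (mem_Ifalse_iff.1 hF))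
    · ext A
      constructor
      · intro hT
        have := Req_low_eq (h A)
          (by rw [deg_eq_of_isT hT]; exact_mod_cast hβ)
        exact mem_Itrue_iff.2 (this ▸ (mem_Itrue_iff.1 hT))
      · intro hT
        have := Req_low_eq' (h A)
          (by rw [deg_eq_of_isT hT]; exact_mod_cast hβ)
        exact mem_Itrue_iff.2 (this ▸ (mem_Itrue_iff.1 hT))

lemma sqa_iff {α : Ordinal} {I J : Interp L} :
    sqa α I J ↔ ∀ A, Rsq α (I A) (J A) := by
  constructor
  · rintro ⟨h1, h2, h3⟩ A
    rcases lt_trichotomy (deg (I A)) (α : WithTop Ordinal) with hlt | heq | hgt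
    · obtain ⟨a, haα, hda, hFT⟩ := deg_le_cases hlt.le
      have haα' : a < α := by rw [hda] at hlt; exact_mod_cast hlt
      have heqa := eqa_iff.1 (h1 a haα') A
      exact Or.inl ⟨Req_low_eq heqa (le_of_eq hda), hlt⟩
    · have hlow : ¬ deg (J A) < (α : WithTop Ordinal) := by
        intro hcon
        obtain ⟨b, hbα, hdb, hFT⟩ := deg_le_cases hcon.le
        have hbα' : b < α := by rw [hdb] at hcon; exact_mod_cast hcon
        have heqb := eqa_iff.1 (h1 b hbα') A
        have := Req_low_eq' heqb (le_of_eq hdb)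
        rw [this] at heq
        rw [hdb] at heq
        exact absurd heq (by exact_mod_cast (ne_of_lt hbα'))
      rcases deg_eq_cases heq with hF | hT
      · exact Or.inr (Or.inl ⟨hF, not_lt.1 hlow⟩)
      · exact Or.inr (Or.inr (Or.inl ⟨hT, h3 hT⟩))
    · refine Or.inr (Or.inr (Or.inr ⟨hgt, ?_, ?_⟩))
      · by_contra hcon
        push_neg at hcon
        obtain ⟨b, hbα, hdb, hFT⟩ := deg_le_cases hcon.le
        have hbα' : b < α := by rw [hdb] at hcon; exact_mod_cast hcon
        have heqb := eqa_iff.1 (h1 b hbα') A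
        have := Req_low_eq' heqb (le_of_eq hdb)
        rw [this, hdb] at hgt
        exact absurd (lt_trans (by exact_mod_cast hbα' : (b : WithTop Ordinal) < α) hgt)
          (lt_irrefl _)
      · intro hF
        have : isF (I A) α := h2 hF
        rw [deg_eq_of_isF this] at hgt
        exact absurd hgt (lt_irrefl _)
  · intro h
    refine ⟨fun β hβ => eqa_iff.2 fun A => Req_of_Rsq_lt (h A) hβ,
      fun A hF => Rsq_F (h A) hF, fun A hT => Rsq_T (h A) hT⟩

/-! ### evaluation respects `Req` and `Rsq` -/

lemma Req_eval {α : Ordinal} {I J : Interp L} (h : ∀ A, Req α (I A) (J A))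
    (φ : Formula L) : ∀ hh : ℕ → HU L, Req α (φ.eval I hh) (φ.eval J hh) := by
  induction φ with
  | verum => exact fun hh => Req_refl _ _
  | falsum => exact fun hh => Req_refl _ _
  | atom p ts => exact fun hh => h _
  | neg φ ih => exact fun hh => Req_Wneg (ih hh)
  | conj φ ψ ih1 ih2 => exact fun hh => Req_min (ih1 hh) (ih2 hh)
  | disj φ ψ ih1 ih2 => exact fun hh => Req_max (ih1 hh) (ih2 hh)
  | all v φ ih => exact fun hh => Req_Winf (fun u => ih _)
  | ex v φ ih => exact fun hh => Req_Wsup (fun u => ih _)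

lemma Rsq_eval {α : Ordinal} (hα : α < omega1) {I J : Interp L}
    (h : ∀ A, Rsq α (I A) (J A)) (φ : Formula L) :
    ∀ hh : ℕ → HU L, Rsq α (φ.eval I hh) (φ.eval J hh) := by
  induction φ with
  | verum => exact fun hh => Rsq_refl _ _
  | falsum => exact fun hh => Rsq_refl _ _
  | atom p ts => exact fun hh => h _
  | neg φ ih => exact fun hh => Rsq_Wneg (ih hh)
  | conj φ ψ ih1 ih2 => exact fun hh => Rsq_min hα (ih1 hh) (ih2 hh)
  | disj φ ψ ih1 ih2 => exact fun hh => Rsq_max hα (ih1 hh) (ih2 hh)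
  | all v φ ih => exact fun hh => Rsq_Winf hα (fun u => ih _)
  | ex v φ ih => exact fun hh => Rsq_Wsup hα (fun u => ih _)

lemma TP_set_eq (P : Program L) (I : Interp L) (A : GroundAtom L) :
    {w | ∃ φ : Formula L, (A, φ) ∈ groundInstances P ∧ w = φ.evalClosed I} =
      Set.range (fun ψ : {φ : Formula L // (A, φ) ∈ groundInstances P} =>
        ψ.1.evalClosed I) := by
  ext w
  constructor
  · rintro ⟨φ, hm, rfl⟩
    exact ⟨⟨φ, hm⟩, rfl⟩
  · rintro ⟨⟨φ, hm⟩, rfl⟩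
    exact ⟨φ, hm, rfl⟩

lemma Req_TP {α : Ordinal} {P : Program L} {I J : Interp L}
    (h : ∀ A, Req α (I A) (J A)) : ∀ A, Req α (TP P I A) (TP P J A) := by
  intro A
  unfold TP
  rw [TP_set_eq, TP_set_eq]
  exact Req_Wsup (fun ψ => Req_eval h ψ.1 (defaultAssignment L))

lemma Rsq_TP {α : Ordinal} (hα : α < omega1) {P : Program L} {I J : Interp L}
    (h : ∀ A, Rsq α (I A) (J A)) : ∀ A, Rsq α (TP P I A) (TP P J A) := by
  intro A
  unfold TP
  rw [TP_set_eq, TP_set_eq]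
  exact Rsq_Wsup hα (fun ψ => Rsq_eval hα h ψ.1 (defaultAssignment L))

/-! ### the transfinite iteration of `T_P` -/

section Chain

variable {P : Program L} {α : Ordinal} {hα : α < omega1} {I : Interp L}

lemma iter_zero : iter P α hα I 0 = I := Ordinal.limitRecOn_zero _ _ _

lemma iter_succ (β : Ordinal) :
    iter P α hα I (Order.succ β) = TP P (iter P α hα I β) := by
  unfold iter
  exact Ordinal.limitRecOn_succ (motive := fun _ => Interp L) _ _ _ _

lemma iter_limit {β : Ordinal} (hβ : Order.IsSuccLimit β) (A : GroundAtom L) :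
    iter P α hα I β A =
      if degLT (I A) α then I A
      else if ∃ γ, ∃ _ : γ < β, isT (iter P α hα I γ A) α then WT α hα
      else if ∀ γ, ∀ _ : γ < β, isF (iter P α hα I γ A) α then WF α hα
      else WF (α + 1) (succ_lt_omega1 hα) := by
  unfold iter
  exact congrFun (Ordinal.limitRecOn_limit (motive := fun _ => Interp L) _ _ _ _ hβ) A

lemma Rsq_to_WT {x : W} (h : (α : WithTop Ordinal) ≤ deg x) : Rsq α x (WT α hα) := by
  rcases eq_or_lt_of_le h with heq | hlt
  · rcases deg_eq_cases heq.symm with hF | hT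
    · exact Or.inr (Or.inl ⟨hF, le_of_eq (deg_WT α hα).symm⟩)
    · exact Or.inr (Or.inr (Or.inl ⟨hT, isT_WT⟩))
  · exact Or.inr (Or.inr (Or.inr ⟨hlt, le_of_eq (deg_WT α hα).symm,
      fun hc => not_isF_isT hc isT_WT⟩))

lemma Rsq_to_Fsucc {x : W} (h : (α : WithTop Ordinal) ≤ deg x) (hnT : ¬ isT x α) :
    Rsq α x (WF (α + 1) (succ_lt_omega1 hα)) := by
  have hd1 : (α : WithTop Ordinal) ≤ deg (WF (α + 1) (succ_lt_omega1 hα)) := by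
    rw [deg_WF]
    exact_mod_cast (lt_add_one α).le
  have hnF1 : ¬ isF (WF (α + 1) (succ_lt_omega1 hα)) α := by
    intro hc
    exact absurd (isF_inj isF_WF hc) (ne_of_gt (lt_add_one α))
  rcases eq_or_lt_of_le h with heq | hlt
  · rcases deg_eq_cases heq.symm with hF | hT
    · exact Or.inr (Or.inl ⟨hF, hd1⟩)
    · exact absurd hT hnT
  · exact Or.inr (Or.inr (Or.inr ⟨hlt, hd1, hnF1⟩))

lemma iter_chain (hI : ∀ A, Rsq α (I A) (TP P I A)) (β : Ordinal) :
    (∀ γ ≤ β, ∀ A, Rsq α (iter P α hα I γ A) (iter P α hα I β A)) ∧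
    (∀ A, Rsq α (iter P α hα I β A) (TP P (iter P α hα I β) A)) := by
  induction β using Ordinal.induction with
  | h β IH =>
  rcases Ordinal.zero_or_succ_or_isSuccLimit β with rfl | ⟨δ, rfl⟩ | hlim
  · refine ⟨fun γ hγ A => ?_, fun A => ?_⟩
    · rw [nonpos_iff_eq_zero.1 hγ]
      exact Rsq_refl _ _
    · rw [iter_zero]
      exact hI A
  · have hδ : δ < Order.succ δ := Order.lt_succ δ
    obtain ⟨IH1, IH2⟩ := IH δ hδ
    refine ⟨fun γ hγ A => ?_, fun A => ?_⟩
    · rcases eq_or_lt_of_le hγ with rfl | hγ'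
      · exact Rsq_refl _ _
      · have h1 := IH1 γ (Order.lt_succ_iff.1 hγ') A
        have h2 : Rsq α (iter P α hα I δ A) (iter P α hα I (Order.succ δ) A) := by
          rw [iter_succ]
          exact IH2 A
        exact Rsq_trans h1 h2
    · rw [iter_succ]
      exact Rsq_TP hα IH2 A
  · -- limit case
    have hUB : ∀ γ < β, ∀ A, Rsq α (iter P α hα I γ A) (iter P α hα I β A) := by
      intro γ hγ A
      have hI0γ : Rsq α (I A) (iter P α hα I γ A) := by
        have := (IH γ hγ).1 0 ((zero_le (a := γ))) A
        rwa [iter_zero] at this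
      rw [iter_limit hlim A]
      split_ifs with hdeg hT hF
      · rw [Rsq_low_eq hI0γ ((degLT_iff _ _).1 hdeg)]
        exact Rsq_refl _ _
      · exact Rsq_to_WT (hα := hα) (Rsq_deg hI0γ (not_lt.1 (fun h => hdeg ((degLT_iff _ _).2 h))))
      · exact Or.inr (Or.inl ⟨hF γ hγ, le_of_eq (deg_WF _ _).symm⟩)
      · refine Rsq_to_Fsucc (hα := hα)
          (Rsq_deg hI0γ (not_lt.1 (fun h => hdeg ((degLT_iff _ _).2 h)))) ?_
        intro hc
        exact hT ⟨γ, hγ, hc⟩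
    have hstep : ∀ γ, γ < β →
        ∀ A, Rsq α (TP P (iter P α hα I γ) A) (TP P (iter P α hα I β) A) :=
      fun γ hγ => Rsq_TP hα (hUB γ hγ)
    have h0β : (0 : Ordinal) < β := hlim.pos
    refine ⟨fun γ hγ A => ?_, fun A => ?_⟩
    · rcases eq_or_lt_of_le hγ with rfl | hγ'
      · exact Rsq_refl _ _
      · exact hUB γ hγ' A
    · have hdegI : ¬ degLT (I A) α → (α : WithTop Ordinal) ≤ deg (I A) := by
        intro h
        exact not_lt.1 (fun hh => h ((degLT_iff _ _).2 hh))
      rw [iter_limit hlim A]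
      split_ifs with hdeg hT hF
      · have c2 : Rsq α (TP P I A) (TP P (iter P α hα I β) A) := by
          have := hstep 0 h0β A
          rwa [iter_zero] at this
        exact Rsq_trans (hI A) c2
      · obtain ⟨γ0, hγ0, hTγ0⟩ := hT
        have hx : isT (TP P (iter P α hα I γ0) A) α := Rsq_T ((IH γ0 hγ0).2 A) hTγ0
        have hy : isT (TP P (iter P α hα I β) A) α := Rsq_T (hstep γ0 hγ0 A) hx
        exact Or.inr (Or.inr (Or.inl ⟨isT_WT, hy⟩))
      · have hF0 : isF (I A) α := by
          have := hF 0 h0β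
          rwa [iter_zero] at this
        have hd1 : (α : WithTop Ordinal) ≤ deg (TP P I A) := Rsq_F_deg (hI A) hF0
        have hd2 : (α : WithTop Ordinal) ≤ deg (TP P (iter P α hα I β) A) := by
          have := hstep 0 h0β A
          rw [iter_zero] at this
          exact Rsq_deg this hd1
        exact Or.inr (Or.inl ⟨isF_WF, hd2⟩)
      · push_neg at hF
        obtain ⟨γ0, hγ0, hne⟩ := hF
        have hI0γ0 : Rsq α (I A) (iter P α hα I γ0 A) := by
          have := (IH γ0 hγ0).1 0 ((zero_le (a := γ0))) A
          rwa [iter_zero] at this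
        have hdγ0 : (α : WithTop Ordinal) ≤ deg (iter P α hα I γ0 A) :=
          Rsq_deg hI0γ0 (hdegI hdeg)
        have hx := (IH γ0 hγ0).2 A
        have hdx : (α : WithTop Ordinal) ≤ deg (TP P (iter P α hα I γ0) A) :=
          Rsq_deg hx hdγ0
        have hnFx : ¬ isF (TP P (iter P α hα I γ0) A) α := fun hc => hne (Rsq_F hx hc)
        have hnTx : ¬ isT (TP P (iter P α hα I γ0) A) α := by
          intro hc
          refine hT ⟨Order.succ γ0, hlim.succ_lt hγ0, ?_⟩
          rw [iter_succ]
          exact hc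
        have hltx : (α : WithTop Ordinal) < deg (TP P (iter P α hα I γ0) A) := by
          rcases eq_or_lt_of_le hdx with heq | hlt
          · rcases deg_eq_cases heq.symm with hc | hc
            · exact absurd hc hnFx
            · exact absurd hc hnTx
          · exact hlt
        obtain ⟨c1, c2⟩ := Rsq_high (hstep γ0 hγ0 A) hltx
        refine Or.inr (Or.inr (Or.inr ⟨?_, c1, c2⟩))
        rw [deg_WF]
        exact_mod_cast lt_add_one α

end Chain

/-! ### countability of the Herbrand base -/

def Term.code : Term L → ℕ
  | .var n => Nat.pair 0 n
  | .const c => Nat.pair 1 c.val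
  | .func f ts => Nat.pair 2 (Nat.pair f.val
      (Encodable.encode (List.ofFn fun i => (ts i).code)))

lemma Term.code_inj : ∀ t₁ t₂ : Term L, t₁.code = t₂.code → t₁ = t₂ := by
  intro t₁
  induction t₁ with
  | var n =>
    intro t₂ h
    cases t₂ <;> simp [Term.code, Nat.pair_eq_pair] at h
    rw [h]
  | const c =>
    intro t₂ h
    cases t₂ <;> simp [Term.code, Nat.pair_eq_pair] at h
    exact congrArg Term.const (Fin.ext h)
  | func f ts ih =>
    intro t₂ h
    cases t₂ with
    | var m => simp [Term.code, Nat.pair_eq_pair] at h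
    | const c => simp [Term.code, Nat.pair_eq_pair] at h
    | func f' ts' =>
      simp only [Term.code, Nat.pair_eq_pair] at h
      obtain ⟨hf, hl⟩ := h.2
      have hff : f = f' := Fin.ext hf
      subst hff
      have hl2 : (List.ofFn fun i => (ts i).code) = List.ofFn fun i => (ts' i).code :=
        Encodable.encode_injective hl
      have hfn := List.ofFn_inj.1 hl2
      have : ts = ts' := by
        funext i
        exact ih i _ (congrFun hfn i)
      rw [this]

instance : Countable (Term L) := ⟨⟨Term.code, fun a b => Term.code_inj a b⟩⟩

instance : Countable (HU L) := Subtype.countable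

instance : Countable (GroundAtom L) := by
  have hinj : Function.Injective
      (fun A : GroundAtom L =>
        (⟨A.pred, A.args⟩ : Σ p : Fin L.nPred, (Fin (L.predAr p) → HU L))) := by
    rintro ⟨p, a⟩ ⟨q, b⟩ h
    obtain ⟨h1, h2⟩ := Sigma.ext_iff.1 h
    dsimp only at h1 h2
    subst h1
    exact congrArg _ (eq_of_heq h2)
  exact hinj.countable

lemma iSup_lt_omega1 {ι : Type} [Countable ι] (o : ι → Ordinal.{0})
    (ho : ∀ i, o i < omega1) : iSup o < omega1 := by
  exact Ordinal.iSup_lt_omega_one ho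

/-! ### stabilisation of the iteration at `ω₁` and the fixed-point property -/

section Stab

variable {P : Program L} {α : Ordinal} {hα : α < omega1} {I : Interp L}

lemma iter_stab (hI : ∀ A, Rsq α (I A) (TP P I A)) :
    ∃ γ0, γ0 < omega1 ∧ ∀ γ, γ0 ≤ γ → γ < omega1 →
      ∀ A, Req α (iter P α hα I γ A) (iter P α hα I omega1 A) := by
  have hchain := iter_chain (hα := hα) hI
  set oT : GroundAtom L → Ordinal := fun A =>
    if h : ∃ γ', ∃ _ : γ' < omega1, isT (iter P α hα I γ' A) α then h.choose else 0
    with hoT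
  set oN : GroundAtom L → Ordinal := fun A =>
    if h : ∃ γ', ∃ _ : γ' < omega1, ¬ isF (iter P α hα I γ' A) α then h.choose else 0
    with hoN
  have hoTlt : ∀ A, oT A < omega1 := by
    intro A
    rw [hoT]
    dsimp only
    split_ifs with h
    · obtain ⟨hlt, _⟩ := h.choose_spec
      exact hlt
    · exact zero_lt_omega1
  have hoNlt : ∀ A, oN A < omega1 := by
    intro A
    rw [hoN]
    dsimp only
    split_ifs with h
    · obtain ⟨hlt, _⟩ := h.choose_spec
      exact hlt
    · exact zero_lt_omega1
  set g : GroundAtom L → Ordinal := fun A => max (oT A) (oN A) with hg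
  have hglt : ∀ A, g A < omega1 := fun A => max_lt (hoTlt A) (hoNlt A)
  refine ⟨iSup g, iSup_lt_omega1 g hglt, ?_⟩
  have hgle : ∀ A, g A ≤ iSup g := fun A =>
    le_ciSup ⟨omega1, fun x ⟨A, hA⟩ => hA ▸ (hglt A).le⟩ A
  intro γ hγ0 hγ A
  have h0γ : Rsq α (I A) (iter P α hα I γ A) := by
    have := (hchain γ).1 0 ((zero_le (a := γ))) A
    rwa [iter_zero] at this
  rw [iter_limit omega1_isLimit A]
  split_ifs with hdeg hT hF
  · rw [Rsq_low_eq h0γ ((degLT_iff _ _).1 hdeg)]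
    exact Req_refl _ _
  · -- the value is `T α`
    have hd : oT A = hT.choose := by rw [hoT]; exact dif_pos hT
    obtain ⟨hlt, hspec⟩ := hT.choose_spec
    have hle : hT.choose ≤ γ := by
      rw [← hd]
      exact le_trans (le_trans (le_max_left _ _) (hgle A)) hγ0
    have hTγ : isT (iter P α hα I γ A) α := Rsq_T ((hchain γ).1 _ hle A) hspec
    exact Or.inl ⟨isT_eq_isT hTγ isT_WT, by rw [deg_eq_of_isT hTγ]⟩
  · exact Or.inl ⟨isF_eq_isF (hF γ hγ) isF_WF, by rw [deg_eq_of_isF (hF γ hγ)]⟩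
  · -- the value is `F (α+1)`
    have hdge : (α : WithTop Ordinal) ≤ deg (iter P α hα I γ A) :=
      Rsq_deg h0γ (not_lt.1 (fun h => hdeg ((degLT_iff _ _).2 h)))
    have hnT : ¬ isT (iter P α hα I γ A) α := fun hc => hT ⟨γ, hγ, hc⟩
    have hF' : ∃ γ', ∃ _ : γ' < omega1, ¬ isF (iter P α hα I γ' A) α := by
      push_neg at hF
      obtain ⟨γ', h1, h2⟩ := hF
      exact ⟨γ', h1, h2⟩
    have hd : oN A = hF'.choose := by rw [hoN]; exact dif_pos hF'
    obtain ⟨hlt, hspec⟩ := hF'.choose_spec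
    have hle : hF'.choose ≤ γ := by
      rw [← hd]
      exact le_trans (le_trans (le_max_right _ _) (hgle A)) hγ0
    have hnF : ¬ isF (iter P α hα I γ A) α :=
      fun hc => hspec (Rsq_F ((hchain γ).1 _ hle A) hc)
    have hgt : (α : WithTop Ordinal) < deg (iter P α hα I γ A) := by
      rcases eq_or_lt_of_le hdge with heq | hlt'
      · rcases deg_eq_cases heq.symm with hc | hc
        · exact absurd hc hnF
        · exact absurd hc hnT
      · exact hlt'
    refine Or.inr ⟨hgt, ?_⟩
    rw [deg_WF]
    exact_mod_cast lt_add_one α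

/-- the `ω₁`-th iterate is a fixed point of `T_P` up to level `α` -/
lemma TP_iter_omega1 (hI : ∀ A, Rsq α (I A) (TP P I A)) :
    ∀ A, Req α (TP P (iter P α hα I omega1) A) (iter P α hα I omega1 A) := by
  obtain ⟨γ0, hγ0, hstab⟩ := iter_stab (hα := hα) hI
  have h1 := hstab γ0 (le_refl γ0) hγ0
  have h2 := hstab (Order.succ γ0) (Order.le_succ γ0) (omega1_isLimit.succ_lt hγ0)
  intro A
  refine Req_trans (Req_TP (fun B => Req_symm (h1 B)) A) ?_
  have := h2 A
  rwa [iter_succ] at this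

end Stab

/-! ### the approximants are well defined, coherent, and fixed points -/

theorem approx_good (P : Program L) : ∀ α, α < omega1 →
    ((∀ A, Req α (TP P (approx P α) A) (approx P α A)) ∧
     ∀ ζ, ζ < α → ∀ A, Req ζ (approx P ζ A) (approx P α A)) := by
  intro α
  induction α using Ordinal.induction with
  | h α IH =>
  intro hα
  have coh : ∀ γ, γ < α → ∀ ζ, ζ < γ → ∀ A, Req ζ (approx P ζ A) (approx P γ A) :=
    fun γ hγ => (IH γ hγ (lt_trans hγ hα)).2
  have fixp : ∀ γ, γ < α → ∀ A, Req γ (TP P (approx P γ) A) (approx P γ A) :=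
    fun γ hγ => (IH γ hγ (lt_trans hγ hα)).1
  have hdeg_of : ∀ {ζ : Ordinal} {A : GroundAtom L},
      (isF (approx P ζ A) ζ ∨ isT (approx P ζ A) ζ) →
      deg (approx P ζ A) = (ζ : WithTop Ordinal) := by
    rintro ζ A (h | h)
    · exact deg_eq_of_isF h
    · exact deg_eq_of_isT h
  have huniq : ∀ ζ γ A, ζ < γ → γ < α →
      (isF (approx P ζ A) ζ ∨ isT (approx P ζ A) ζ) →
      (isF (approx P γ A) γ ∨ isT (approx P γ A) γ) → False := by
    intro ζ γ A hζγ hγα hζ hγ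
    have hdζ := hdeg_of hζ
    have hdγ := hdeg_of hγ
    have heq := Req_low_eq (coh γ hγα ζ hζγ A) (le_of_eq hdζ)
    rw [← heq, hdζ] at hdγ
    exact absurd (WithTop.coe_injective hdγ) (ne_of_lt hζγ)
  have hbig : ∀ γ, γ < α → ∀ A,
      (∀ ζ, ζ ≤ γ → ¬(isF (approx P ζ A) ζ ∨ isT (approx P ζ A) ζ)) →
      (γ : WithTop Ordinal) < deg (approx P γ A) := by
    intro γ hγ A hno
    by_contra hcon
    obtain ⟨a, haγ, hda, hFT⟩ := deg_le_cases (not_lt.1 hcon)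
    rcases eq_or_lt_of_le haγ with rfl | halt
    · exact hno a (le_refl a) hFT
    · have heq := Req_low_eq' (coh γ hγ a halt A) (le_of_eq hda)
      refine hno a halt.le ?_
      rw [heq]
      exact hFT
  set U := unionInterp α hα (fun γ _ => approx P γ) with hUdef
  have hUval : ∀ A (h : ∃ ζ, ∃ _ : ζ < α,
      isF (approx P ζ A) ζ ∨ isT (approx P ζ A) ζ), U A = approx P h.choose A := by
    intro A h
    rw [hUdef]
    unfold unionInterp
    exact dif_pos h
  have hUneg : ∀ A, (¬ ∃ ζ, ∃ _ : ζ < α,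
      isF (approx P ζ A) ζ ∨ isT (approx P ζ A) ζ) → U A = WF α hα := by
    intro A h
    rw [hUdef]
    unfold unionInterp
    exact dif_neg h
  have hC : ∀ γ, γ < α → ∀ A, Req γ (approx P γ A) (U A) := by
    intro γ hγ A
    by_cases hset : ∃ ζ, ∃ _ : ζ < α, isF (approx P ζ A) ζ ∨ isT (approx P ζ A) ζ
    · obtain ⟨hcα, hcspec⟩ := hset.choose_spec
      rw [hUval A hset]
      have hd := hdeg_of hcspec
      rcases lt_trichotomy hset.choose γ with hlt | heq | hgt
      · have heq2 := Req_low_eq (coh γ hγ _ hlt A) (le_of_eq hd)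
        rw [← heq2]
        exact Req_refl _ _
      · rw [heq]
        exact Req_refl _ _
      · have hno : ∀ ζ, ζ ≤ γ → ¬(isF (approx P ζ A) ζ ∨ isT (approx P ζ A) ζ) :=
          fun ζ hζ hs => huniq ζ hset.choose A (lt_of_le_of_lt hζ hgt) hcα hs hcspec
        exact Or.inr ⟨hbig γ hγ A hno, by rw [hd]; exact_mod_cast hgt⟩
    · rw [hUneg A hset]
      have hno : ∀ ζ, ζ ≤ γ → ¬(isF (approx P ζ A) ζ ∨ isT (approx P ζ A) ζ) :=
        fun ζ hζ hs => hset ⟨ζ, lt_of_le_of_lt hζ hγ, hs⟩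
      exact Or.inr ⟨hbig γ hγ A hno, by rw [deg_WF]; exact_mod_cast hγ⟩
  have hG2 : ∀ A, Rsq α (U A) (TP P U A) := by
    intro A
    by_cases hset : ∃ ζ, ∃ _ : ζ < α, isF (approx P ζ A) ζ ∨ isT (approx P ζ A) ζ
    · obtain ⟨hcα, hcspec⟩ := hset.choose_spec
      have hUA := hUval A hset
      have hd := hdeg_of hcspec
      have h1 := Req_TP (P := P) (hC hset.choose hcα) A
      have h2 := fixp hset.choose hcα A
      have h3 : Req hset.choose (TP P U A) (U A) :=
        Req_trans (Req_symm h1) (Req_trans h2 (hC hset.choose hcα A))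
      have heqv : TP P U A = U A := Req_low_eq' h3 (by rw [hUA, hd])
      exact Or.inl ⟨heqv.symm, by rw [hUA, hd]; exact_mod_cast hcα⟩
    · rw [hUneg A hset]
      refine Or.inr (Or.inl ⟨isF_WF, ?_⟩)
      by_contra hcon
      push_neg at hcon
      obtain ⟨a, _, hda, hFT⟩ := deg_le_cases hcon.le
      have haα : a < α := by
        rw [hda] at hcon
        exact_mod_cast hcon
      have h1 := Req_TP (P := P) (fun B => Req_symm (hC a haα B)) A
      have h2 := fixp a haα A
      have heqv := Req_low_eq (Req_trans h1 h2) (le_of_eq hda)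
      refine hset ⟨a, haα, ?_⟩
      rw [← heqv]
      exact hFT
  have hguard : (∀ γ, ∀ _ : γ < α, ∀ ζ, ζ < γ → eqa ζ (approx P ζ) (approx P γ)) ∧
      sqa α (unionInterp α hα fun γ _ => approx P γ)
        (TP P (unionInterp α hα fun γ _ => approx P γ)) := by
    refine ⟨fun γ hγ ζ hζ => eqa_iff.2 (coh γ hγ ζ hζ), ?_⟩
    rw [← hUdef]
    exact sqa_iff.2 hG2
  have happrox : approx P α = iter P α hα U omega1 := by
    rw [approx]
    exact (dif_pos hα).trans (if_pos hguard)
  constructor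
  · intro A
    rw [happrox]
    exact TP_iter_omega1 hG2 A
  · intro ζ hζ A
    have hUM : Rsq α (U A) (iter P α hα U omega1 A) := by
      have := (iter_chain (hα := hα) hG2 omega1).1 0 (zero_le) A
      rwa [iter_zero] at this
    refine Req_trans (hC ζ hζ A) ?_
    rw [happrox]
    exact Req_of_Rsq_lt hUM hζ

/-! ### the depth of a program -/

section Depth

variable {P : Program L}

lemma huniqG (P : Program L) : ∀ ζ γ (A : GroundAtom L), ζ < γ → γ < omega1 →
    (isF (approx P ζ A) ζ ∨ isT (approx P ζ A) ζ) →
    (isF (approx P γ A) γ ∨ isT (approx P γ A) γ) → False := by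
  intro ζ γ A hζγ hγ hsζ hsγ
  have hdζ : deg (approx P ζ A) = (ζ : WithTop Ordinal) := by
    rcases hsζ with h | h
    · exact deg_eq_of_isF h
    · exact deg_eq_of_isT h
  have hdγ : deg (approx P γ A) = (γ : WithTop Ordinal) := by
    rcases hsγ with h | h
    · exact deg_eq_of_isF h
    · exact deg_eq_of_isT h
  have heq := Req_low_eq ((approx_good P γ hγ).2 ζ hζγ A) (le_of_eq hdζ)
  rw [← heq, hdζ] at hdγ
  exact absurd (WithTop.coe_injective hdγ) (ne_of_lt hζγ)

lemma depth_spec (P : Program L) : depth P < omega1 ∧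
    ∀ γ, depth P ≤ γ → γ < omega1 →
      Ifalse (approx P γ) γ = ∅ ∧ Itrue (approx P γ) γ = ∅ := by
  set S := {δ | δ < omega1 ∧ ∀ γ, δ ≤ γ → γ < omega1 →
    Ifalse (approx P γ) γ = ∅ ∧ Itrue (approx P γ) γ = ∅} with hS
  have hSne : S.Nonempty := by
    set stl : GroundAtom L → Ordinal := fun A =>
      if h : ∃ γ', ∃ _ : γ' < omega1,
          isF (approx P γ' A) γ' ∨ isT (approx P γ' A) γ' then h.choose + 1 else 0
      with hstl
    have hstlt : ∀ A, stl A < omega1 := by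
      intro A
      rw [hstl]
      dsimp only
      split_ifs with h
      · obtain ⟨hlt, _⟩ := h.choose_spec
        exact succ_lt_omega1 hlt
      · exact zero_lt_omega1
    have hbdd : BddAbove (Set.range stl) := ⟨omega1, fun x ⟨A, hA⟩ => hA ▸ (hstlt A).le⟩
    have hkey : ∀ γ, iSup stl ≤ γ → γ < omega1 →
        ∀ A : GroundAtom L, ¬ (isF (approx P γ A) γ ∨ isT (approx P γ A) γ) := by
      intro γ hγ0 hγ A hsettled
      have hex : ∃ γ', ∃ _ : γ' < omega1,
          isF (approx P γ' A) γ' ∨ isT (approx P γ' A) γ' := ⟨γ, hγ, hsettled⟩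
      obtain ⟨hclt, hcspec⟩ := hex.choose_spec
      have hceq : hex.choose = γ := by
        rcases lt_trichotomy hex.choose γ with h' | h' | h'
        · exact absurd (huniqG P _ _ A h' hγ hcspec hsettled) not_false
        · exact h'
        · exact absurd (huniqG P _ _ A h' hclt hsettled hcspec) not_false
      have hstlA : stl A = hex.choose + 1 := by
        rw [hstl]
        exact dif_pos hex
      have : γ + 1 ≤ γ := by
        calc γ + 1 = stl A := by rw [hstlA, hceq]
        _ ≤ iSup stl := le_ciSup hbdd A
        _ ≤ γ := hγ0
      exact absurd this (not_le.2 (lt_add_one γ))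
    refine ⟨iSup stl, iSup_lt_omega1 stl hstlt, fun γ hγ0 hγ => ⟨?_, ?_⟩⟩
    · rw [Set.eq_empty_iff_forall_notMem]
      exact fun A hA => hkey γ hγ0 hγ A (Or.inl hA)
    · rw [Set.eq_empty_iff_forall_notMem]
      exact fun A hA => hkey γ hγ0 hγ A (Or.inr hA)
  have hmem : depth P ∈ S := csInf_mem hSne
  exact ⟨hmem.1, hmem.2⟩

lemma not_settled_ge_depth {γ : Ordinal} (hγd : depth P ≤ γ) (hγ : γ < omega1)
    (A : GroundAtom L) : ¬ (isF (approx P γ A) γ ∨ isT (approx P γ A) γ) := by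
  obtain ⟨hF, hT⟩ := (depth_spec P).2 γ hγd hγ
  rintro (h | h)
  · exact absurd (hF ▸ (mem_Ifalse_iff.2 h) : A ∈ (∅ : Set (GroundAtom L))) (Set.notMem_empty A)
  · exact absurd (hT ▸ (mem_Itrue_iff.2 h) : A ∈ (∅ : Set (GroundAtom L))) (Set.notMem_empty A)

lemma MP_eq_low {A : GroundAtom L} (h : degLT (approx P (depth P) A) (depth P)) :
    MP P A = approx P (depth P) A := by
  unfold MP
  rw [if_pos h]

lemma MP_eq_WZ {A : GroundAtom L} (h : ¬ degLT (approx P (depth P) A) (depth P)) :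
    MP P A = WZ := by
  unfold MP
  rw [if_neg h]

/-- `M_P` agrees with the approximant `M_e` up to level `e`, for every `e ≥ depth P`. -/
lemma MP_Req (P : Program L) : ∀ e, depth P ≤ e → e < omega1 →
    ∀ A, Req e (MP P A) (approx P e A) := by
  intro e hde he A
  have hd : depth P < omega1 := (depth_spec P).1
  by_cases hdeg : degLT (approx P (depth P) A) (depth P)
  · rw [MP_eq_low hdeg]
    rw [degLT_iff] at hdeg
    obtain ⟨a, had, hda, hFT⟩ := deg_le_cases hdeg.le
    have halt : a < depth P := by
      rw [hda] at hdeg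
      exact_mod_cast hdeg
    have h1 : approx P a A = approx P (depth P) A :=
      Req_low_eq' ((approx_good P (depth P) hd).2 a halt A) (le_of_eq hda)
    have h2 : approx P a A = approx P e A := by
      rcases eq_or_lt_of_le hde with rfl | hlt
      · exact h1
      · exact Req_low_eq ((approx_good P e he).2 a (lt_of_lt_of_le halt hde) A)
          (by rw [h1, hda])
    rw [← h1, h2]
    exact Req_refl _ _
  · rw [MP_eq_WZ hdeg]
    refine Or.inr ⟨by rw [deg_WZ]; exact WithTop.coe_lt_top e, ?_⟩
    by_contra hcon
    push_neg at hcon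
    obtain ⟨b, hbe, hdb, hFT⟩ := deg_le_cases hcon
    rcases eq_or_lt_of_le hbe with rfl | hblt
    · exact not_settled_ge_depth hde he A hFT
    · have h1 : approx P b A = approx P e A :=
        Req_low_eq' ((approx_good P e he).2 b hblt A) (le_of_eq hdb)
      have hsb : isF (approx P b A) b ∨ isT (approx P b A) b := by
        rw [h1]
        exact hFT
      have hdegb : deg (approx P b A) = (b : WithTop Ordinal) := by
        rcases hsb with h | h
        · exact deg_eq_of_isF h
        · exact deg_eq_of_isT h
      rcases lt_or_ge b (depth P) with hbd | hdb'
      · have h2 : approx P b A = approx P (depth P) A :=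
          Req_low_eq ((approx_good P (depth P) hd).2 b hbd A) (le_of_eq hdegb)
        refine hdeg ?_
        rw [degLT_iff, ← h2, hdegb]
        exact_mod_cast hbd
      · -- b ≥ depth P : contradicts the depth property at level b
        exact not_settled_ge_depth hdb' (lt_trans hblt he) A hsb

end Depth

/-! ### substitution lemmas and order inversion lemmas -/

lemma le_WF_inv {w : W} {a : Ordinal} {ha : a < omega1} (h : w ≤ WF a ha) :
    ∃ c, c ≤ a ∧ isF w c := by
  rcases W.cases w with ⟨c, hc, rfl⟩ | rfl | ⟨c, hc, rfl⟩
  · exact ⟨c, WF_le_WF_iff.1 h, isF_WF⟩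
  · rcases h with h | h
    · exact absurd h.symm WF_ne_WZ
    · exact h.elim
  · rcases h with h | h
    · exact absurd h.symm WF_ne_WT
    · exact h.elim

lemma WT_lt_inv {w : W} {a : Ordinal} {ha : a < omega1} (h : WT a ha < w) :
    ∃ γ, γ < a ∧ isT w γ := by
  rcases W.cases w with ⟨c, hc, rfl⟩ | rfl | ⟨c, hc, rfl⟩
  · exact h.elim
  · exact h.elim
  · exact ⟨c, WT_lt_WT_iff.1 h, isT_WT⟩

lemma WZ_lt_inv {w : W} (h : WZ < w) : ∃ γ, γ < omega1 ∧ isT w γ := by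
  rcases W.cases w with ⟨c, hc, rfl⟩ | rfl | ⟨c, hc, rfl⟩
  · exact h.elim
  · exact h.elim
  · exact ⟨c, hc, isT_WT⟩

lemma ge_WT_inv {v x : W} {γ : Ordinal} (hv : isT v γ) (h : v ≤ x) :
    ∃ ζ, ζ ≤ γ ∧ isT x ζ := by
  obtain ⟨hγ, rfl⟩ := isT_iff.1 hv
  rcases W.cases x with ⟨c, hc, rfl⟩ | rfl | ⟨c, hc, rfl⟩
  · rcases h with h | h
    · exact absurd h.symm (fun hh => WF_ne_WT hh)
    · exact h.elim
  · rcases h with h | h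
    · exact absurd h (fun hh => WZ_ne_WT hh.symm)
    · exact h.elim
  · exact ⟨c, WT_le_WT_iff.1 h, isT_WT⟩

lemma Term.evalT_ground {t : Term L} (ht : t.ground) (h : ℕ → HU L) :
    t.evalT h = ⟨t, ht⟩ := by
  induction t with
  | var n => exact absurd ht not_false
  | const c => rfl
  | func f ts ih =>
    refine Subtype.ext ?_
    show Term.func f (fun i => ((ts i).evalT h).1) = Term.func f ts
    congr 1
    funext i
    exact congrArg Subtype.val (ih i (ht i))

lemma Term.evalT_subst (σ : ℕ → Term L) (h h' : ℕ → HU L)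
    (hσ : ∀ n, (σ n).evalT h' = h n) : ∀ t : Term L, (t.subst σ).evalT h' = t.evalT h := by
  intro t
  induction t with
  | var n => exact hσ n
  | const c => rfl
  | func f ts ih =>
    refine Subtype.ext ?_
    show Term.func f (fun i => (((ts i).subst σ).evalT h').1) = _
    congr 1
    funext i
    exact congrArg Subtype.val (ih i)

lemma Term.ground_subst (σ : ℕ → Term L) (hσ : ∀ n, (σ n).ground) :
    ∀ t : Term L, (t.subst σ).ground := by
  intro t
  induction t with
  | var n => exact hσ n
  | const c => trivial
  | func f ts ih => exact fun i => ih i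

lemma Term.ground_vars {t : Term L} (ht : t.ground) : t.vars = ∅ := by
  induction t with
  | var n => exact absurd ht not_false
  | const c => rfl
  | func f ts ih =>
    show (⋃ i, (ts i).vars) = ∅
    simp only [Set.iUnion_eq_empty]
    exact fun i => ih i (ht i)

lemma Term.vars_subst (σ : ℕ → Term L) :
    ∀ t : Term L, (t.subst σ).vars ⊆ ⋃ n ∈ t.vars, (σ n).vars := by
  intro t
  induction t with
  | var n =>
    intro m hm
    exact Set.mem_biUnion rfl hm
  | const c => exact fun m hm => absurd hm (Set.notMem_empty m)
  | func f ts ih =>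
    intro m hm
    obtain ⟨s, ⟨i, rfl⟩, hms⟩ := hm
    obtain ⟨s2, ⟨n, rfl⟩, hn⟩ := ih i hms
    simp only [Set.mem_iUnion] at hn
    obtain ⟨hnvars, hmn⟩ := hn
    exact Set.mem_biUnion (Set.mem_iUnion.2 ⟨i, hnvars⟩) hmn

lemma Formula.freeVars_subst :
    ∀ (φ : Formula L) (σ : ℕ → Term L),
      (φ.subst σ).freeVars ⊆ ⋃ n ∈ φ.freeVars, (σ n).vars := by
  intro φ
  induction φ with
  | verum => exact fun σ m hm => absurd hm (Set.notMem_empty m)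
  | falsum => exact fun σ m hm => absurd hm (Set.notMem_empty m)
  | atom p ts =>
    intro σ m hm
    obtain ⟨s, ⟨i, rfl⟩, hms⟩ := hm
    obtain ⟨s2, ⟨n, rfl⟩, hn⟩ := Term.vars_subst σ (ts i) hms
    simp only [Set.mem_iUnion] at hn
    obtain ⟨hnvars, hmn⟩ := hn
    exact Set.mem_biUnion (Set.mem_iUnion.2 ⟨i, hnvars⟩) hmn
  | neg φ ih => exact ih
  | conj φ ψ ih1 ih2 =>
    intro σ m hm
    rcases hm with hm | hm
    · obtain ⟨s, ⟨n, rfl⟩, hn⟩ := ih1 σ hm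
      simp only [Set.mem_iUnion] at hn
      exact Set.mem_biUnion (Set.mem_union_left _ hn.1) hn.2
    · obtain ⟨s, ⟨n, rfl⟩, hn⟩ := ih2 σ hm
      simp only [Set.mem_iUnion] at hn
      exact Set.mem_biUnion (Set.mem_union_right _ hn.1) hn.2
  | disj φ ψ ih1 ih2 =>
    intro σ m hm
    rcases hm with hm | hm
    · obtain ⟨s, ⟨n, rfl⟩, hn⟩ := ih1 σ hm
      simp only [Set.mem_iUnion] at hn
      exact Set.mem_biUnion (Set.mem_union_left _ hn.1) hn.2
    · obtain ⟨s, ⟨n, rfl⟩, hn⟩ := ih2 σ hm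
      simp only [Set.mem_iUnion] at hn
      exact Set.mem_biUnion (Set.mem_union_right _ hn.1) hn.2
  | all v φ ih =>
    intro σ m hm
    obtain ⟨hm1, hm2⟩ := hm
    obtain ⟨s, ⟨n, rfl⟩, hn⟩ := ih (Function.update σ v (Term.var v)) hm1
    simp only [Set.mem_iUnion] at hn
    obtain ⟨hnfv, hmn⟩ := hn
    by_cases hnv : n = v
    · subst hnv
      rw [Function.update_self] at hmn
      exact absurd hmn (by simpa [Term.vars] using hm2)
    · rw [Function.update_of_ne hnv] at hmn
      exact Set.mem_biUnion ⟨hnfv, hnv⟩ hmn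
  | ex v φ ih =>
    intro σ m hm
    obtain ⟨hm1, hm2⟩ := hm
    obtain ⟨s, ⟨n, rfl⟩, hn⟩ := ih (Function.update σ v (Term.var v)) hm1
    simp only [Set.mem_iUnion] at hn
    obtain ⟨hnfv, hmn⟩ := hn
    by_cases hnv : n = v
    · subst hnv
      rw [Function.update_self] at hmn
      exact absurd hmn (by simpa [Term.vars] using hm2)
    · rw [Function.update_of_ne hnv] at hmn
      exact Set.mem_biUnion ⟨hnfv, hnv⟩ hmn

lemma Formula.freeVars_subst_ground {σ : ℕ → Term L} (hσ : ∀ n, (σ n).ground)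
    (φ : Formula L) : (φ.subst σ).freeVars = ∅ := by
  rw [Set.eq_empty_iff_forall_notMem]
  intro m hm
  obtain ⟨s, ⟨n, rfl⟩, hn⟩ := Formula.freeVars_subst φ σ hm
  simp only [Set.mem_iUnion] at hn
  rw [Term.ground_vars (hσ n)] at hn
  exact absurd hn.2 (Set.notMem_empty m)

lemma Formula.eval_subst (I : Interp L) :
    ∀ (φ : Formula L) (σ : ℕ → Term L) (h h' : ℕ → HU L),
      (∀ n, (σ n).ground ∨ σ n = .var n) → (∀ n, (σ n).evalT h' = h n) →
      (φ.subst σ).eval I h' = φ.eval I h := by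
  intro φ
  induction φ with
  | verum => intro σ h h' _ _; rfl
  | falsum => intro σ h h' _ _; rfl
  | atom p ts =>
    intro σ h h' _ hev
    show I ⟨p, fun i => ((ts i).subst σ).evalT h'⟩ = I ⟨p, fun i => (ts i).evalT h⟩
    congr 1
    have : (fun i => ((ts i).subst σ).evalT h') = fun i => (ts i).evalT h := by
      funext i
      exact Term.evalT_subst σ h h' hev (ts i)
    rw [this]
  | neg φ ih =>
    intro σ h h' hg hev
    show Wneg _ = Wneg _
    rw [ih σ h h' hg hev]
  | conj φ ψ ih1 ih2 =>
    intro σ h h' hg hev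
    show min _ _ = min _ _
    rw [ih1 σ h h' hg hev, ih2 σ h h' hg hev]
  | disj φ ψ ih1 ih2 =>
    intro σ h h' hg hev
    show max _ _ = max _ _
    rw [ih1 σ h h' hg hev, ih2 σ h h' hg hev]
  | all v φ ih =>
    intro σ h h' hg hev
    show Winf _ = Winf _
    congr 1
    have : (fun u : HU L => (φ.subst (Function.update σ v (Term.var v))).eval I
        (Function.update h' v u)) = fun u : HU L => φ.eval I (Function.update h v u) := by
      funext u
      refine ih (Function.update σ v (Term.var v)) (Function.update h v u)
        (Function.update h' v u) ?_ ?_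
      · intro n
        by_cases hnv : n = v
        · subst hnv
          rw [Function.update_self]
          exact Or.inr rfl
        · rw [Function.update_of_ne hnv]
          exact hg n
      · intro n
        by_cases hnv : n = v
        · rw [hnv, Function.update_self, Function.update_self]
          show Function.update h' v u v = u
          rw [Function.update_self]
        · rw [Function.update_of_ne hnv, Function.update_of_ne hnv]
          rcases hg n with hgr | hvar
          · rw [Term.evalT_ground hgr, ← hev n, Term.evalT_ground hgr]
          · rw [hvar]
            show Function.update h' v u n = h n
            rw [Function.update_of_ne hnv]
            have hn := hev n
            rw [hvar] at hn
            exact hn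
    rw [this]
  | ex v φ ih =>
    intro σ h h' hg hev
    show Wsup _ = Wsup _
    congr 1
    have : (fun u : HU L => (φ.subst (Function.update σ v (Term.var v))).eval I
        (Function.update h' v u)) = fun u : HU L => φ.eval I (Function.update h v u) := by
      funext u
      refine ih (Function.update σ v (Term.var v)) (Function.update h v u)
        (Function.update h' v u) ?_ ?_
      · intro n
        by_cases hnv : n = v
        · subst hnv
          rw [Function.update_self]
          exact Or.inr rfl
        · rw [Function.update_of_ne hnv]
          exact hg n
      · intro n
        by_cases hnv : n = v
        · rw [hnv, Function.update_self, Function.update_self]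
          show Function.update h' v u v = u
          rw [Function.update_self]
        · rw [Function.update_of_ne hnv, Function.update_of_ne hnv]
          rcases hg n with hgr | hvar
          · rw [Term.evalT_ground hgr, ← hev n, Term.evalT_ground hgr]
          · rw [hvar]
            show Function.update h' v u n = h n
            rw [Function.update_of_ne hnv]
            have hn := hev n
            rw [hvar] at hn
            exact hn
    rw [this]

/-! ### the key semantic inequality -/

lemma MP_ground_le (P : Program L) {A : GroundAtom L} {ψ : Formula L}
    (hmem : (A, ψ) ∈ groundInstances P) : ψ.evalClosed (MP P) ≤ MP P A := by
  have hd : depth P < omega1 := (depth_spec P).1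
  by_cases hdeg : degLT (approx P (depth P) A) (depth P)
  · rw [MP_eq_low hdeg]
    rw [degLT_iff] at hdeg
    obtain ⟨a, _, hda, hFT⟩ := deg_le_cases hdeg.le
    have halt : a < depth P := by
      rw [hda] at hdeg
      exact_mod_cast hdeg
    have hReq : Req (depth P) (ψ.evalClosed (MP P)) (ψ.evalClosed (approx P (depth P))) :=
      Req_eval (MP_Req P (depth P) (le_refl _) hd) ψ (defaultAssignment L)
    have hle : ψ.evalClosed (approx P (depth P)) ≤ TP P (approx P (depth P)) A := by
      unfold TP
      exact le_Wsup ⟨ψ, hmem, rfl⟩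
    have hTPA : TP P (approx P (depth P)) A = approx P (depth P) A :=
      Req_low_eq' ((approx_good P (depth P) hd).1 A)
        (by rw [hda]; exact_mod_cast halt.le)
    rw [hTPA] at hle
    rcases hFT with hF | hT
    · obtain ⟨haω, hAval⟩ := isF_iff.1 hF
      rw [hAval] at hle
      obtain ⟨c, hca, hcF⟩ := le_WF_inv hle
      have heqw := Req_low_eq' hReq
        (by rw [deg_eq_of_isF hcF]; exact_mod_cast le_trans hca halt.le)
      rw [heqw, hAval]
      exact hle
    · obtain ⟨haω, hAval⟩ := isT_iff.1 hT
      rw [hAval]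
      by_contra hcon
      obtain ⟨γ, hγa, hγT⟩ := WT_lt_inv (lt_of_not_ge hcon)
      have heqw := Req_low_eq hReq
        (by rw [deg_eq_of_isT hγT]; exact_mod_cast (lt_trans hγa halt).le)
      rw [heqw] at hγT
      rw [hAval] at hle
      obtain ⟨ζ, hζγ2, hζT⟩ := ge_WT_inv hγT hle
      rw [isT_inj hζT isT_WT] at hζγ2
      exact absurd (lt_of_le_of_lt hζγ2 hγa) (lt_irrefl a)
  · rw [MP_eq_WZ hdeg]
    by_contra hcon
    obtain ⟨γ, hγω, hγT⟩ := WZ_lt_inv (lt_of_not_ge hcon)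
    have he : max (depth P) γ < omega1 := max_lt hd hγω
    have hde : depth P ≤ max (depth P) γ := le_max_left _ _
    have hγe : γ ≤ max (depth P) γ := le_max_right _ _
    have hReq : Req (max (depth P) γ) (ψ.evalClosed (MP P))
        (ψ.evalClosed (approx P (max (depth P) γ))) :=
      Req_eval (MP_Req P _ hde he) ψ (defaultAssignment L)
    have heqw := Req_low_eq hReq (by rw [deg_eq_of_isT hγT]; exact_mod_cast hγe)
    have hT' : isT (ψ.evalClosed (approx P (max (depth P) γ))) γ := heqw ▸ hγT
    have hle : ψ.evalClosed (approx P (max (depth P) γ)) ≤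
        TP P (approx P (max (depth P) γ)) A := by
      unfold TP
      exact le_Wsup ⟨ψ, hmem, rfl⟩
    obtain ⟨ζ, hζγ, hζT⟩ := ge_WT_inv hT' hle
    have hζe : ζ ≤ max (depth P) γ := le_trans hζγ hγe
    have heq2 := Req_low_eq ((approx_good P _ he).1 A)
      (by rw [deg_eq_of_isT hζT]; exact_mod_cast hζe)
    have hMe : isT (approx P (max (depth P) γ) A) ζ := heq2 ▸ hζT
    rcases eq_or_lt_of_le hζe with rfl | hζlt
    · exact not_settled_ge_depth hde he A (Or.inr hMe)
    · have h1 : approx P ζ A = approx P (max (depth P) γ) A :=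
        Req_low_eq' ((approx_good P _ he).2 ζ hζlt A) (le_of_eq (deg_eq_of_isT hMe))
      have hsζ : isT (approx P ζ A) ζ := by
        rw [h1]
        exact hMe
      rcases lt_or_ge ζ (depth P) with hζd | hdζ
      · have h2 : approx P ζ A = approx P (depth P) A :=
          Req_low_eq ((approx_good P (depth P) hd).2 ζ hζd A)
            (le_of_eq (deg_eq_of_isT hsζ))
        refine hdeg ?_
        rw [degLT_iff, ← h2, deg_eq_of_isT hsζ]
        exact_mod_cast hζd
      · exact not_settled_ge_depth hdζ (lt_of_le_of_lt hζe he) A (Or.inr hsζ)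

/-- `M_P` is a model of `P`. -/
theorem MP_isModel {L : Language} (P : Program L) : isModel (MP P) P := by
  intro r hr h
  set σ : ℕ → Term L := fun n => (h n).1 with hσdef
  have hσg : ∀ n, (σ n).ground := fun n => (h n).2
  have hσgv : ∀ n, (σ n).ground ∨ σ n = .var n := fun n => Or.inl (hσg n)
  have hσev : ∀ (h' : ℕ → HU L) n, (σ n).evalT h' = h n := by
    intro h' n
    rw [Term.evalT_ground (hσg n) h']
    exact Subtype.ext rfl
  have hg : ∀ i, ((r.headArgs i).subst σ).ground :=
    fun i => Term.ground_subst σ hσg _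
  have hmem : ((⟨r.headPred, fun i => ⟨(r.headArgs i).subst σ, hg i⟩⟩ : GroundAtom L),
      r.body.subst σ) ∈ groundInstances P :=
    ⟨r, hr, σ, ⟨hg, rfl⟩, rfl, Formula.freeVars_subst_ground hσg r.body⟩
  have hhead : r.headAtom.eval (MP P) h =
      MP P ⟨r.headPred, fun i => ⟨(r.headArgs i).subst σ, hg i⟩⟩ := by
    show MP P ⟨r.headPred, fun i => (r.headArgs i).evalT h⟩ = _
    congr 1
    have harg : (fun i => (r.headArgs i).evalT h) =
        (fun i => (⟨(r.headArgs i).subst σ, hg i⟩ : HU L)) := by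
      funext i
      rw [← Term.evalT_subst σ h h (hσev h) (r.headArgs i)]
      exact Term.evalT_ground (hg i) h
    rw [harg]
  have hbody : r.body.eval (MP P) h = (r.body.subst σ).evalClosed (MP P) := by
    unfold Formula.evalClosed
    exact (Formula.eval_subst (MP P) r.body σ h (defaultAssignment L) hσgv
      (hσev _)).symm
  rw [hbody, hhead]
  exact MP_ground_le P hmem
end ILP
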